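/- arXiv:2404.05770 — 4 statements merged into one kernel-verified Lean document; each statement's English description precedes it below -/
import Mathlib

section
/- Σ_{n=1}^∞ (−1)^{n−1} 9^n / (n² · C(4n,2n)) = −2π²/9 + 2 ln²(2 + √3). -/
open Complex Set

noncomputable section

/-- coefficient `a m = 4^m / (2 m^2 C(2m,m))`, with `a 0 = 0` by division by zero -/
def aa (m : ℕ) : ℝ := 4 ^ m / (2 * (m : ℝ) ^ 2 * (Nat.centralBinom m : ℝ))

def ff (w : ℂ) : ℂ := ∑' m : ℕ, (aa m : ℂ) * w ^ (2 * m)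
def D1 (w : ℂ) : ℂ := ∑' m : ℕ, (aa m : ℂ) * (2 * m : ℕ) * w ^ (2 * m - 1)
def D2 (w : ℂ) : ℂ :=
  ∑' m : ℕ, (aa m : ℂ) * (2 * m : ℕ) * ((2 * m - 1 : ℕ) : ℂ) * w ^ (2 * m - 2)

lemma aa_zero : aa 0 = 0 := by simp [aa]

lemma aa_one : aa 1 = 1 := by
  simp [aa, Nat.centralBinom]
  norm_num [Nat.choose]

lemma aa_nonneg (m : ℕ) : 0 ≤ aa m := by
  unfold aa; positivity

lemma aa_le_one (m : ℕ) : aa m ≤ 1 := by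
  rcases Nat.eq_zero_or_pos m with h | h
  · simp [h, aa_zero]
  · have h4 : (4 : ℝ) ^ m ≤ 2 * m * Nat.centralBinom m := by
      exact_mod_cast Nat.four_pow_le_two_mul_self_mul_centralBinom m h
    have hm : (1 : ℝ) ≤ (m : ℝ) := by exact_mod_cast h
    have hcb : (1 : ℝ) ≤ (Nat.centralBinom m : ℝ) := by
      exact_mod_cast (Nat.centralBinom_pos m)
    rw [aa, div_le_one (by positivity)]
    nlinarith [mul_nonneg (mul_nonneg (by linarith : (0:ℝ) ≤ 2*(m:ℝ)) (by linarith : (0:ℝ) ≤ (Nat.centralBinom m : ℝ))) (by linarith : (0:ℝ) ≤ (m:ℝ) - 1)]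

/-- the recurrence -/
lemma key_rec (j : ℕ) (hj : 1 ≤ j) :
    aa (j + 1) * (2 * (j:ℝ) + 2) * (2 * (j:ℝ) + 1) = 4 * (j:ℝ) ^ 2 * aa j := by
  have hc : ((j:ℝ) + 1) * (Nat.centralBinom (j+1) : ℝ)
      = 2 * (2 * (j:ℝ) + 1) * (Nat.centralBinom j : ℝ) := by
    exact_mod_cast Nat.succ_mul_centralBinom_succ j
  have hcb : (0:ℝ) < (Nat.centralBinom j : ℝ) := by exact_mod_cast Nat.centralBinom_pos j
  have hcb' : (0:ℝ) < (Nat.centralBinom (j+1) : ℝ) := by exact_mod_cast Nat.centralBinom_pos (j+1)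
  have hjR : (1:ℝ) ≤ (j:ℝ) := by exact_mod_cast hj
  rw [aa, aa]
  field_simp
  push_cast
  linear_combination (-4 * 4^j * ((j:ℝ)+1)) * hc


/-! summability bounds -/

def u1 (m : ℕ) : ℝ := 2 * m * ((9:ℝ)/10) ^ (2 * m - 1)
def u2 (m : ℕ) : ℝ := (2 * m) * (2 * m) * ((9:ℝ)/10) ^ (2 * m - 2)

lemma sq910 : ((81:ℝ)/100) = ((9:ℝ)/10) ^ 2 := by norm_num

lemma summable_u1 : Summable u1 := by
  have base : Summable (fun m : ℕ => (m:ℝ) ^ 1 * ((81:ℝ)/100) ^ m) :=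
    summable_pow_mul_geometric_of_norm_lt_one 1
      (by rw [Real.norm_eq_abs, abs_of_pos (by norm_num : (0:ℝ) < 81/100)]; norm_num)
  refine Summable.of_nonneg_of_le (fun m => by unfold u1; positivity) (fun m => ?_)
    (base.mul_left (20/9))
  cases m with
  | zero => simp [u1]
  | succ m =>
    have he : ((81:ℝ)/100) ^ (m+1) = ((9:ℝ)/10) ^ (2*(m+1)-1) * ((9:ℝ)/10) := by
      rw [sq910, ← pow_mul, show 2*(m+1) - 1 = 2*m+1 from by omega,
        show 2*(m+1) = (2*m+1)+1 from by omega, pow_succ]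
    unfold u1
    rw [he]
    push_cast
    apply le_of_eq
    ring

lemma summable_u2 : Summable u2 := by
  have base : Summable (fun m : ℕ => (m:ℝ) ^ 2 * ((81:ℝ)/100) ^ m) :=
    summable_pow_mul_geometric_of_norm_lt_one 2
      (by rw [Real.norm_eq_abs, abs_of_pos (by norm_num : (0:ℝ) < 81/100)]; norm_num)
  refine Summable.of_nonneg_of_le (fun m => by unfold u2; positivity) (fun m => ?_)
    (base.mul_left (400/81))
  cases m with
  | zero => simp [u2]
  | succ m =>
    have he : ((81:ℝ)/100) ^ (m+1) = ((9:ℝ)/10) ^ (2*(m+1)-2) * ((81:ℝ)/100) := by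
      rw [sq910, ← pow_mul, show 2*(m+1) - 2 = 2*m from by omega,
        show 2*(m+1) = 2*m+2 from by omega, pow_add]
    unfold u2
    rw [he]
    push_cast
    apply le_of_eq
    ring

lemma norm_term0 (m : ℕ) (x : ℂ) : ‖(aa m : ℂ) * x ^ (2*m)‖ = aa m * ‖x‖ ^ (2*m) := by
  rw [norm_mul, norm_pow, Complex.norm_real, Real.norm_eq_abs, _root_.abs_of_nonneg (aa_nonneg m)]

lemma norm_term1 (m : ℕ) (x : ℂ) :
    ‖(aa m : ℂ) * ((2*m : ℕ) : ℂ) * x ^ (2*m-1)‖ = aa m * (2*m) * ‖x‖ ^ (2*m-1) := by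
  rw [norm_mul, norm_mul, norm_pow, Complex.norm_real, Real.norm_eq_abs,
    _root_.abs_of_nonneg (aa_nonneg m), Complex.norm_natCast]
  push_cast; ring

lemma norm_term2 (m : ℕ) (x : ℂ) :
    ‖(aa m : ℂ) * ((2*m : ℕ) : ℂ) * ((2*m-1 : ℕ) : ℂ) * x ^ (2*m-2)‖
      = aa m * (2*m) * ((2*m-1 : ℕ) : ℝ) * ‖x‖ ^ (2*m-2) := by
  rw [norm_mul, norm_mul, norm_mul, norm_pow, Complex.norm_real, Real.norm_eq_abs,
    _root_.abs_of_nonneg (aa_nonneg m), Complex.norm_natCast, Complex.norm_natCast]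
  push_cast; ring

lemma bound1 (m : ℕ) (x : ℂ) (hx : ‖x‖ ≤ 9/10) :
    ‖(aa m : ℂ) * ((2*m : ℕ) : ℂ) * x ^ (2*m-1)‖ ≤ u1 m := by
  rw [norm_term1, u1]
  have h1 : ‖x‖ ^ (2*m-1) ≤ ((9:ℝ)/10) ^ (2*m-1) := pow_le_pow_left₀ (norm_nonneg x) hx _
  have h2 : aa m * (2*(m:ℝ)) ≤ 2*m := by
    nlinarith [mul_nonneg (sub_nonneg.mpr (aa_le_one m)) (by positivity : (0:ℝ) ≤ 2*(m:ℝ))]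
  have h3 : (0:ℝ) ≤ ‖x‖ ^ (2*m-1) := by positivity
  exact mul_le_mul h2 h1 h3 (by positivity)

lemma bound2 (m : ℕ) (x : ℂ) (hx : ‖x‖ ≤ 9/10) :
    ‖(aa m : ℂ) * ((2*m : ℕ) : ℂ) * ((2*m-1 : ℕ) : ℂ) * x ^ (2*m-2)‖ ≤ u2 m := by
  rw [norm_term2, u2]
  have h1 : ‖x‖ ^ (2*m-2) ≤ ((9:ℝ)/10) ^ (2*m-2) := pow_le_pow_left₀ (norm_nonneg x) hx _
  have h4 : ((2*m-1 : ℕ) : ℝ) ≤ 2*(m:ℝ) := by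
    have h : (2*m-1 : ℕ) ≤ 2*m := by omega
    calc ((2*m-1 : ℕ) : ℝ) ≤ ((2*m : ℕ) : ℝ) := Nat.cast_le.mpr h
      _ = 2*(m:ℝ) := by push_cast; ring
  have h2 : aa m * (2*(m:ℝ)) * ((2*m-1 : ℕ) : ℝ) ≤ (2*(m:ℝ)) * (2*(m:ℝ)) := by
    have t1 : aa m * (2*(m:ℝ)) ≤ 2*(m:ℝ) := by
      nlinarith [mul_nonneg (sub_nonneg.mpr (aa_le_one m)) (by positivity : (0:ℝ) ≤ 2*(m:ℝ))]
    exact mul_le_mul t1 h4 (Nat.cast_nonneg _) (by positivity)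
  have h3 : (0:ℝ) ≤ ‖x‖ ^ (2*m-2) := by positivity
  calc aa m * (2*(m:ℝ)) * ((2*m-1 : ℕ) : ℝ) * ‖x‖ ^ (2*m-2)
      ≤ (2*(m:ℝ)) * (2*(m:ℝ)) * ((9:ℝ)/10) ^ (2*m-2) := mul_le_mul h2 h1 h3 (by positivity)
    _ = (2*(m:ℕ):ℝ) * (2*(m:ℕ):ℝ) * ((9:ℝ)/10) ^ (2*m-2) := by push_cast; ring

lemma summable0 (x : ℂ) (hx : ‖x‖ ≤ 9/10) :
    Summable (fun m : ℕ => (aa m : ℂ) * x ^ (2*m)) := by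
  apply Summable.of_norm_bounded (g := fun m => ((81:ℝ)/100) ^ m)
    (summable_geometric_of_lt_one (by norm_num) (by norm_num))
  intro m
  rw [norm_term0]
  have h1 : ‖x‖ ^ (2*m) ≤ ((9:ℝ)/10) ^ (2*m) := pow_le_pow_left₀ (norm_nonneg x) hx _
  have h2 : ((9:ℝ)/10) ^ (2*m) = ((81:ℝ)/100) ^ m := by rw [sq910, ← pow_mul, mul_comm]
  calc aa m * ‖x‖ ^ (2*m) ≤ 1 * ((9:ℝ)/10) ^ (2*m) :=
        mul_le_mul (aa_le_one m) h1 (by positivity) one_pos.le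
    _ = ((81:ℝ)/100) ^ m := by rw [one_mul, h2]

lemma summable1 (x : ℂ) (hx : ‖x‖ ≤ 9/10) :
    Summable (fun m : ℕ => (aa m : ℂ) * ((2*m : ℕ) : ℂ) * x ^ (2*m-1)) :=
  Summable.of_norm_bounded summable_u1 (fun m => bound1 m x hx)

lemma summable2 (x : ℂ) (hx : ‖x‖ ≤ 9/10) :
    Summable (fun m : ℕ => (aa m : ℂ) * ((2*m : ℕ) : ℂ) * ((2*m-1 : ℕ) : ℂ) * x ^ (2*m-2)) :=
  Summable.of_norm_bounded summable_u2 (fun m => bound2 m x hx)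

/-! derivatives -/

lemma ff_hasDeriv {x : ℂ} (hx : x ∈ Metric.ball (0:ℂ) (9/10)) : HasDerivAt ff (D1 x) x := by
  have h := hasDerivAt_tsum_of_isPreconnected (u := u1)
    (g := fun m w => (aa m : ℂ) * w ^ (2*m))
    (g' := fun m w => (aa m : ℂ) * ((2*m:ℕ):ℂ) * w ^ (2*m-1))
    (y₀ := 0) (y := x)
    summable_u1 Metric.isOpen_ball (convex_ball (0:ℂ) (9/10)).isPreconnected
    (fun m y _ => by simpa [mul_assoc] using (hasDerivAt_pow (2*m) y).const_mul ((aa m : ℂ)))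
    (fun m y hy => bound1 m y (le_of_lt (mem_ball_zero_iff.mp hy)))
    (mem_ball_zero_iff.mpr (by norm_num)) (summable0 0 (by norm_num)) hx
  exact h

lemma D1_hasDeriv {x : ℂ} (hx : x ∈ Metric.ball (0:ℂ) (9/10)) : HasDerivAt D1 (D2 x) x := by
  have h := hasDerivAt_tsum_of_isPreconnected (u := u2)
    (g := fun m w => (aa m : ℂ) * ((2*m:ℕ):ℂ) * w ^ (2*m-1))
    (g' := fun m w => (aa m : ℂ) * ((2*m:ℕ):ℂ) * ((2*m-1:ℕ):ℂ) * w ^ (2*m-2))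
    (y₀ := 0) (y := x)
    summable_u2 Metric.isOpen_ball (convex_ball (0:ℂ) (9/10)).isPreconnected
    (fun m y _ => by
      simpa [mul_assoc, Nat.sub_sub] using
        (hasDerivAt_pow (2*m-1) y).const_mul ((aa m : ℂ) * ((2*m:ℕ):ℂ)))
    (fun m y hy => bound2 m y (le_of_lt (mem_ball_zero_iff.mp hy)))
    (mem_ball_zero_iff.mpr (by norm_num)) (summable1 0 (by norm_num)) hx
  exact h

/-! the ODE -/

lemma ode {x : ℂ} (hx : ‖x‖ ≤ 9/10) : (1 - x^2) * D2 x - x * D1 x = 2 := by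
  have hs1 := summable1 x hx
  have hs2 := summable2 x hx
  have hsE1 : Summable (fun m : ℕ => (aa m : ℂ) * ((2*m:ℕ):ℂ) * x ^ (2*m)) := by
    apply (hs1.mul_left x).congr
    intro m
    cases m with
    | zero => simp
    | succ k =>
      have hp : x ^ (2*(k+1)) = x ^ (2*(k+1)-1) * x := by
        rw [← pow_succ]; congr 1 <;> omega
      rw [hp]; ring
  have hsE2 : Summable (fun m : ℕ => (aa m : ℂ) * ((2*m:ℕ):ℂ) * ((2*m-1:ℕ):ℂ) * x ^ (2*m)) := by
    apply (hs2.mul_left (x^2)).congr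
    intro m
    cases m with
    | zero => simp
    | succ k =>
      have hp : x ^ (2*(k+1)) = x ^ (2*(k+1)-2) * x^2 := by
        rw [← pow_add]; congr 1 <;> omega
      rw [hp]; ring
  have hcast : ∀ k : ℕ, (((2*(k+1)-1 : ℕ)):ℂ) = ((2*(k+1) : ℕ) : ℂ) - 1 := by
    intro k
    have h : (2*(k+1)-1 : ℕ) = 2*k+1 := by omega
    rw [h]; push_cast; ring
  have hsEE : Summable (fun m : ℕ => (aa m : ℂ) * ((2*m:ℕ):ℂ) * ((2*m:ℕ):ℂ) * x ^ (2*m)) := by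
    apply (hsE2.add hsE1).congr
    intro m
    cases m with
    | zero => simp
    | succ k => rw [hcast k]; ring
  have step1 : x * D1 x = ∑' m : ℕ, (aa m : ℂ) * ((2*m:ℕ):ℂ) * x ^ (2*m) := by
    rw [D1, ← tsum_mul_left]
    apply tsum_congr
    intro m
    cases m with
    | zero => simp
    | succ k =>
      have hp : x ^ (2*(k+1)) = x ^ (2*(k+1)-1) * x := by
        rw [← pow_succ]; congr 1 <;> omega
      rw [hp]; ring
  have step2 : x^2 * D2 x
      = ∑' m : ℕ, (aa m : ℂ) * ((2*m:ℕ):ℂ) * ((2*m-1:ℕ):ℂ) * x ^ (2*m) := by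
    rw [D2, ← tsum_mul_left]
    apply tsum_congr
    intro m
    cases m with
    | zero => simp
    | succ k =>
      have hp : x ^ (2*(k+1)) = x ^ (2*(k+1)-2) * x^2 := by
        rw [← pow_add]; congr 1 <;> omega
      rw [hp]; ring
  have combine : x^2 * D2 x + x * D1 x
      = ∑' m : ℕ, (aa m : ℂ) * ((2*m:ℕ):ℂ) * ((2*m:ℕ):ℂ) * x ^ (2*m) := by
    rw [step1, step2, ← Summable.tsum_add hsE2 hsE1]
    apply tsum_congr
    intro m
    cases m with
    | zero => simp
    | succ k => rw [hcast k]; ring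
  have shiftA : D2 x = ∑' j : ℕ,
      (aa (j+1) : ℂ) * ((2*(j+1):ℕ):ℂ) * ((2*(j+1)-1:ℕ):ℂ) * x ^ (2*(j+1)-2) := by
    rw [D2, Summable.tsum_eq_zero_add hs2]
    simp
  calc (1 - x^2) * D2 x - x * D1 x
      = D2 x - (x^2 * D2 x + x * D1 x) := by ring
    _ = (∑' j : ℕ, (aa (j+1) : ℂ) * ((2*(j+1):ℕ):ℂ) * ((2*(j+1)-1:ℕ):ℂ) * x ^ (2*(j+1)-2))
        - ∑' m : ℕ, (aa m : ℂ) * ((2*m:ℕ):ℂ) * ((2*m:ℕ):ℂ) * x ^ (2*m) := by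
        rw [combine, shiftA]
    _ = ∑' j : ℕ, ((aa (j+1) : ℂ) * ((2*(j+1):ℕ):ℂ) * ((2*(j+1)-1:ℕ):ℂ) * x ^ (2*(j+1)-2)
        - (aa j : ℂ) * ((2*j:ℕ):ℂ) * ((2*j:ℕ):ℂ) * x ^ (2*j)) := by
        rw [Summable.tsum_sub ((summable_nat_add_iff 1).mpr hs2) hsEE]
    _ = 2 := by
        rw [tsum_eq_single 0]
        · norm_num [aa_one, aa_zero]
        · intro j hj
          have hjj : 1 ≤ j := Nat.one_le_iff_ne_zero.mpr hj
          have kc0 := key_rec j hjj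
          have kc : ((aa (j+1) : ℂ)) * (2*(j:ℂ)+2) * (2*(j:ℂ)+1) = 4*(j:ℂ)^2*(aa j : ℂ) := by
            exact_mod_cast congrArg (Complex.ofReal) kc0
          have e1 : (2*(j+1)-2 : ℕ) = 2*j := by omega
          have e2 : (2*(j+1)-1 : ℕ) = 2*j+1 := by omega
          have e3 : (2*(j+1) : ℕ) = 2*j+2 := by omega
          rw [e1, e2, e3]
          push_cast
          linear_combination (x^(2*j)) * kc

/-! values at 0 -/

lemma ff_zero : ff 0 = 0 := by
  rw [ff]
  have h : ∀ m : ℕ, (aa m : ℂ) * (0:ℂ) ^ (2*m) = 0 := by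
    intro m
    cases m with
    | zero => simp [aa_zero]
    | succ k =>
      have hne : 2*(k+1) ≠ 0 := by omega
      simp [zero_pow hne]
  rw [tsum_congr h, tsum_zero]

lemma D1_zero : D1 0 = 0 := by
  rw [D1]
  have h : ∀ m : ℕ, (aa m : ℂ) * ((2*m:ℕ):ℂ) * (0:ℂ) ^ (2*m-1) = 0 := by
    intro m
    cases m with
    | zero => simp
    | succ k =>
      have hne : 2*(k+1)-1 ≠ 0 := by omega
      simp [zero_pow hne]
  rw [tsum_congr h, tsum_zero]

/-! the key transcendental identity -/

lemma path_eq (z : ℂ)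
    (hz : ∀ σ : ℝ, σ ∈ Icc (0:ℝ) 1 → ‖Complex.sin ((σ:ℂ) * z)‖ < 9/10) :
    ff (Complex.sin z) = z ^ 2 := by
  set Φ : ℝ → ℂ := fun σ => ff (Complex.sin ((σ:ℂ)*z)) - (σ:ℂ)^2*z^2 with hΦ
  set Ψ : ℝ → ℂ := fun σ =>
    D1 (Complex.sin ((σ:ℂ)*z)) * Complex.cos ((σ:ℂ)*z) * z - 2*z^2*(σ:ℂ) with hΨ
  have hsin : ∀ σ : ℝ, HasDerivAt (fun ζ : ℂ => Complex.sin (ζ*z))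
      (Complex.cos ((σ:ℂ)*z) * z) (σ:ℂ) := by
    intro σ
    have h0 : HasDerivAt (fun ζ : ℂ => ζ*z) z (σ:ℂ) := by
      simpa using (hasDerivAt_id ((σ:ℂ))).mul_const z
    simpa [Function.comp_def] using (Complex.hasDerivAt_sin (((σ:ℂ))*z)).comp ((σ:ℂ)) h0
  have hcos : ∀ σ : ℝ, HasDerivAt (fun ζ : ℂ => Complex.cos (ζ*z))
      (-Complex.sin ((σ:ℂ)*z) * z) (σ:ℂ) := by
    intro σ
    have h0 : HasDerivAt (fun ζ : ℂ => ζ*z) z (σ:ℂ) := by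
      simpa using (hasDerivAt_id ((σ:ℂ))).mul_const z
    simpa [Function.comp_def] using (Complex.hasDerivAt_cos (((σ:ℂ))*z)).comp ((σ:ℂ)) h0
  have h1 : ∀ σ ∈ Icc (0:ℝ) 1, HasDerivAt Φ (Ψ σ) σ := by
    intro σ hσ
    have hmem := mem_ball_zero_iff.mpr (hz σ hσ)
    have hffc : HasDerivAt (fun ζ : ℂ => ff (Complex.sin (ζ*z)))
        (D1 (Complex.sin ((σ:ℂ)*z)) * (Complex.cos ((σ:ℂ)*z) * z)) (σ:ℂ) := by
      simpa [Function.comp_def] using (ff_hasDeriv hmem).comp ((σ:ℂ)) (hsin σ)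
    have hsq : HasDerivAt (fun ζ : ℂ => ζ^2*z^2) (2*(σ:ℂ)*z^2) (σ:ℂ) := by
      have := (hasDerivAt_pow 2 ((σ:ℂ))).mul_const (z^2)
      simpa [mul_comm, mul_assoc] using this
    have := (hffc.sub hsq).comp_ofReal
    have heq : D1 (Complex.sin ((σ:ℂ)*z)) * (Complex.cos ((σ:ℂ)*z) * z) - 2*(σ:ℂ)*z^2
        = Ψ σ := by rw [hΨ]; ring
    rw [heq] at this
    exact this
  have h2 : ∀ σ ∈ Icc (0:ℝ) 1, HasDerivAt Ψ 0 σ := by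
    intro σ hσ
    have hmem := mem_ball_zero_iff.mpr (hz σ hσ)
    set w := Complex.sin ((σ:ℂ)*z) with hw
    have hD1c : HasDerivAt (fun ζ : ℂ => D1 (Complex.sin (ζ*z)))
        (D2 w * (Complex.cos ((σ:ℂ)*z) * z)) (σ:ℂ) := by
      simpa [Function.comp_def] using (D1_hasDeriv hmem).comp ((σ:ℂ)) (hsin σ)
    have hmul := (hD1c.mul (hcos σ)).mul_const z
    have hlin : HasDerivAt (fun ζ : ℂ => 2*z^2*ζ) (2*z^2) (σ:ℂ) := by
      simpa using (hasDerivAt_id ((σ:ℂ))).const_mul (2*z^2)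
    have htot := (hmul.sub hlin).comp_ofReal
    have hode := ode (le_of_lt (mem_ball_zero_iff.mp hmem))
    have hpyth := Complex.sin_sq_add_cos_sq ((σ:ℂ)*z)
    have heq : (D2 w * (Complex.cos ((σ:ℂ)*z) * z) * Complex.cos ((σ:ℂ)*z)
        + D1 w * (-Complex.sin ((σ:ℂ)*z) * z)) * z - 2*z^2 = 0 := by
      rw [← hw]
      linear_combination z^2 * hode + z^2 * D2 w * hpyth
    rw [heq] at htot
    exact htot
  have hΨ0 : Ψ 0 = 0 := by
    simp [hΨ, D1_zero]
  have hΨconst := constant_of_has_deriv_right_zero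
    (fun σ hσ => (h2 σ hσ).continuousAt.continuousWithinAt)
    (fun σ hσ => ((h2 σ (mem_Icc_of_Ico hσ)).hasDerivWithinAt))
  have hΨzero : ∀ σ ∈ Icc (0:ℝ) 1, Ψ σ = 0 := by
    intro σ hσ
    rw [hΨconst σ hσ, hΨ0]
  have hΦconst := constant_of_has_deriv_right_zero
    (fun σ hσ => (h1 σ hσ).continuousAt.continuousWithinAt)
    (fun σ hσ => by
      have := (h1 σ (mem_Icc_of_Ico hσ)).hasDerivWithinAt (s := Ici σ)
      rwa [hΨzero σ (mem_Icc_of_Ico hσ)] at this)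
  have hend := hΦconst 1 (by norm_num)
  have hΦ0 : Φ 0 = 0 := by simp [hΦ, ff_zero]
  have hΦ1 : Φ 1 = ff (Complex.sin z) - z^2 := by simp [hΦ]
  rw [hΦ0, hΦ1] at hend
  linear_combination hend

/-! specific points -/

def al : ℝ := Real.pi/6
def be : ℝ := Real.log (2 + Real.sqrt 3) / 2
def z0 : ℂ := (al:ℂ) + (be:ℂ)*Complex.I
def z1 : ℂ := -((starRingEnd ℂ) z0)

lemma al_pos : 0 < al := by unfold al; positivity

lemma be_pos : 0 < be := by
  unfold be
  have h : (1:ℝ) < 2 + Real.sqrt 3 := by nlinarith [Real.sqrt_nonneg 3]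
  have := Real.log_pos h
  linarith

lemma sqrt2_sqrt6 : Real.sqrt 2 * Real.sqrt 6 = 2 * Real.sqrt 3 := by
  rw [← Real.sqrt_mul (by norm_num : (0:ℝ) ≤ 2), show (2*6:ℝ) = 2^2*3 by norm_num,
    Real.sqrt_mul (by positivity), Real.sqrt_sq (by norm_num)]

lemma exp_be : Real.exp be = (Real.sqrt 2 + Real.sqrt 6)/2 := by
  have h2 : (0:ℝ) < 2 + Real.sqrt 3 := by positivity
  have hmul : Real.exp be * Real.exp be = 2 + Real.sqrt 3 := by
    rw [← Real.exp_add, show be + be = Real.log (2 + Real.sqrt 3) by unfold be; ring,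
      Real.exp_log h2]
  have key : ((Real.sqrt 2 + Real.sqrt 6)/2)^2 = 2 + Real.sqrt 3 := by
    have h6 := Real.sq_sqrt (show (0:ℝ) ≤ 6 by norm_num)
    have h2' := Real.sq_sqrt (show (0:ℝ) ≤ 2 by norm_num)
    nlinarith [sqrt2_sqrt6]
  have h1 : Real.sqrt (2 + Real.sqrt 3) = (Real.sqrt 2 + Real.sqrt 6)/2 := by
    rw [← key, Real.sqrt_sq (by positivity)]
  have h0 : Real.sqrt (Real.exp be * Real.exp be) = Real.exp be :=
    Real.sqrt_mul_self (Real.exp_pos be).le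
  rw [← h1, ← hmul, h0]

lemma exp_neg_be : Real.exp (-be) = (Real.sqrt 6 - Real.sqrt 2)/2 := by
  rw [Real.exp_neg, exp_be]
  have h6 := Real.sq_sqrt (show (0:ℝ) ≤ 6 by norm_num)
  have h2' := Real.sq_sqrt (show (0:ℝ) ≤ 2 by norm_num)
  have hmul : (Real.sqrt 2 + Real.sqrt 6)/2 * ((Real.sqrt 6 - Real.sqrt 2)/2) = 1 := by
    nlinarith
  field_simp at hmul ⊢
  nlinarith [hmul]

lemma cosh_be : Real.cosh be = Real.sqrt 6 / 2 := by
  rw [Real.cosh_eq, exp_be, exp_neg_be]; ring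

lemma sinh_be : Real.sinh be = Real.sqrt 2 / 2 := by
  rw [Real.sinh_eq, exp_be, exp_neg_be]; ring

lemma sin_form (a b : ℝ) : Complex.sin ((a:ℂ) + (b:ℂ)*Complex.I)
    = ((Real.sin a * Real.cosh b : ℝ) : ℂ)
      + ((Real.cos a * Real.sinh b : ℝ) : ℂ) * Complex.I := by
  rw [Complex.sin_add, Complex.sin_mul_I, Complex.cos_mul_I,
    ← Complex.ofReal_sin, ← Complex.ofReal_cos, ← Complex.ofReal_sinh, ← Complex.ofReal_cosh]
  push_cast
  ring

lemma bound_z0 : ∀ σ : ℝ, σ ∈ Icc (0:ℝ) 1 → ‖Complex.sin ((σ:ℂ) * z0)‖ < 9/10 := by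
  intro σ hσ
  obtain ⟨h0, h1'⟩ := hσ
  have hform : (σ:ℂ)*z0 = ((σ*al : ℝ):ℂ) + ((σ*be : ℝ):ℂ)*Complex.I := by
    rw [z0]; push_cast; ring
  rw [hform, sin_form]
  rw [show ((Real.sin (σ*al) * Real.cosh (σ*be) : ℝ) : ℂ)
      + ((Real.cos (σ*al) * Real.sinh (σ*be) : ℝ) : ℂ) * Complex.I
    = Complex.mk (Real.sin (σ*al) * Real.cosh (σ*be)) (Real.cos (σ*al) * Real.sinh (σ*be))
    from by rw [Complex.mk_eq_add_mul_I]]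
  have hnorm : ‖Complex.mk (Real.sin (σ*al) * Real.cosh (σ*be))
      (Real.cos (σ*al) * Real.sinh (σ*be))‖
      = Real.sqrt ((Real.sin (σ*al) * Real.cosh (σ*be))^2
        + (Real.cos (σ*al) * Real.sinh (σ*be))^2) := by
    rw [Complex.norm_def, Complex.normSq_mk]
    ring_nf
  rw [hnorm]
  rw [Real.sqrt_lt' (by norm_num)]
  have hid : (Real.sin (σ*al) * Real.cosh (σ*be))^2 + (Real.cos (σ*al) * Real.sinh (σ*be))^2
      = Real.sin (σ*al)^2 + Real.sinh (σ*be)^2 := by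
    linear_combination (Real.sin (σ*al)^2) * Real.cosh_sq (σ*be)
      + (Real.sinh (σ*be)^2) * Real.sin_sq_add_cos_sq (σ*al)
  rw [hid]
  have hpi := Real.pi_lt_d2
  have hpi0 := Real.pi_pos
  have hsal : Real.sin (σ*al)^2 ≤ (σ*al)^2 := by
    have hnn : 0 ≤ σ*al := mul_nonneg h0 al_pos.le
    have hle : Real.sin (σ*al) ≤ σ*al := by
      rcases eq_or_lt_of_le hnn with h | h
      · rw [← h]; simp
      · exact (Real.sin_lt h).le
    have hge : 0 ≤ Real.sin (σ*al) := by
      apply Real.sin_nonneg_of_nonneg_of_le_pi hnn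
      have : σ*al ≤ al := by nlinarith [al_pos]
      have : al ≤ Real.pi := by unfold al; nlinarith
      linarith [mul_nonneg h0 al_pos.le]; 
    nlinarith
  have hsal2 : (σ*al)^2 ≤ al^2 := by
    nlinarith [mul_nonneg (mul_nonneg (sub_nonneg.mpr h1') (by linarith : (0:ℝ) ≤ σ + 1)) (sq_nonneg al)]
  have hal2 : al^2 < 0.276 := by
    unfold al; nlinarith
  have hsh : Real.sinh (σ*be)^2 ≤ 1/2 := by
    have hnn : 0 ≤ Real.sinh (σ*be) := by
      rw [Real.sinh_nonneg_iff]
      exact mul_nonneg h0 be_pos.le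
    have hle : Real.sinh (σ*be) ≤ Real.sinh be := by
      rw [Real.sinh_le_sinh]
      nlinarith [be_pos]
    have hval : Real.sinh be ^ 2 = 1/2 := by
      rw [sinh_be]
      rw [div_pow, Real.sq_sqrt (by norm_num : (0:ℝ) ≤ 2)]
      norm_num
    nlinarith
  nlinarith

lemma bound_z1 : ∀ σ : ℝ, σ ∈ Icc (0:ℝ) 1 → ‖Complex.sin ((σ:ℂ) * z1)‖ < 9/10 := by
  intro σ hσ
  have hform : (σ:ℂ)*z1 = -((starRingEnd ℂ) ((σ:ℂ)*z0)) := by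
    rw [z1, map_mul, Complex.conj_ofReal]
    ring
  rw [hform, Complex.sin_neg, Complex.sin_conj]
  rw [norm_neg]
  rw [show ‖(starRingEnd ℂ) (Complex.sin ((σ:ℂ)*z0))‖ = ‖Complex.sin ((σ:ℂ)*z0)‖ from
    RCLike.norm_conj _]
  exact bound_z0 σ hσ

lemma sin_z0 : Complex.sin z0 = ((Real.sqrt 6/4 : ℝ) : ℂ)
    + ((Real.sqrt 6/4 : ℝ) : ℂ) * Complex.I := by
  rw [z0, sin_form]
  unfold al be
  rw [Real.sin_pi_div_six, Real.cos_pi_div_six]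
  rw [show Real.log (2 + Real.sqrt 3)/2 = be from rfl, cosh_be, sinh_be]
  have h32 : Real.sqrt 3 * Real.sqrt 2 = Real.sqrt 6 := by
    rw [← Real.sqrt_mul (by norm_num : (0:ℝ) ≤ 3)]
    norm_num
  congr 2
  · rw [show (1:ℝ)/2 * (Real.sqrt 6/2) = Real.sqrt 6/4 by ring]
  · rw [show Real.sqrt 3/2 * (Real.sqrt 2/2) = Real.sqrt 3 * Real.sqrt 2/4 by ring, h32]

lemma sin_z1 : Complex.sin z1 = -((starRingEnd ℂ) (Complex.sin z0)) := by
  rw [z1, Complex.sin_neg, ← Complex.sin_conj]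

/-! assembling the sum -/

lemma key0 : ff (Complex.sin z0) = z0^2 := path_eq z0 bound_z0
lemma key1 : ff (Complex.sin z1) = z1^2 := path_eq z1 bound_z1

def w0 : ℂ := ((Real.sqrt 6/4 : ℝ) : ℂ) + ((Real.sqrt 6/4 : ℝ) : ℂ) * Complex.I
def w1 : ℂ := -((starRingEnd ℂ) w0)

lemma w0_sq : w0^2 = (3/4) * Complex.I := by
  have hc : (((Real.sqrt 6 : ℝ)):ℂ)^2 = 6 := by
    rw [← Complex.ofReal_pow, Real.sq_sqrt (by norm_num : (0:ℝ) ≤ 6)]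
    norm_num
  rw [w0]
  push_cast
  linear_combination ((1+2*Complex.I+Complex.I^2)/16) * hc + (3/8) * Complex.I_sq

lemma w1_sq : w1^2 = -(w0^2) := by
  rw [w1, w0]
  rw [map_add, map_mul, Complex.conj_ofReal, Complex.conj_I]
  set c : ℂ := ((Real.sqrt 6/4 : ℝ) : ℂ)
  linear_combination (2*c^2) * Complex.I_sq

lemma norm_w0 : ‖w0‖ ≤ 9/10 := by
  have h := bound_z0 1 (by norm_num)
  have h1 : ((1:ℝ):ℂ) * z0 = z0 := by norm_num
  rw [h1, sin_z0] at h
  rw [w0]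
  exact h.le

lemma norm_w1 : ‖w1‖ ≤ 9/10 := by
  rw [w1, norm_neg, RCLike.norm_conj]
  exact norm_w0

lemma ff_w0 : ff w0 = z0^2 := by rw [← key0, sin_z0, w0]

lemma ff_w1 : ff w1 = z1^2 := by
  rw [← key1, sin_z1, sin_z0, w1, w0]

theorem hasSum_main : HasSum
    (fun n : ℕ => ((((-1 : ℝ) ^ n * 9 ^ (n + 1) /
      (((n : ℝ) + 1) ^ 2 * (Nat.choose (4 * (n + 1)) (2 * (n + 1)) : ℝ))) : ℝ) : ℂ))
    (-4 * (z0^2 + z1^2)) := by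
  have hS0 : HasSum (fun m : ℕ => (aa m : ℂ) * w0 ^ (2*m)) (z0^2) := by
    have := (summable0 w0 norm_w0).hasSum
    rwa [show (∑' m : ℕ, (aa m : ℂ) * w0 ^ (2*m)) = ff w0 from rfl, ff_w0] at this
  have hS1 : HasSum (fun m : ℕ => (aa m : ℂ) * w1 ^ (2*m)) (z1^2) := by
    have := (summable0 w1 norm_w1).hasSum
    rwa [show (∑' m : ℕ, (aa m : ℂ) * w1 ^ (2*m)) = ff w1 from rfl, ff_w1] at this
  have hAdd := hS0.add hS1
  set g : ℕ → ℂ := fun m => (aa m : ℂ) * ((3/4) * Complex.I)^m * (1 + (-1:ℂ)^m) with hg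
  have hterm : (fun m : ℕ => (aa m : ℂ) * w0 ^ (2*m) + (aa m : ℂ) * w1 ^ (2*m)) = g := by
    funext m
    rw [hg]
    rw [pow_mul, pow_mul, w1_sq, w0_sq, neg_pow]
    ring
  rw [hterm] at hAdd
  have he_inj : Function.Injective (fun n : ℕ => 2*n+2) := by
    intro a b h
    simpa using h
  have hsupp : ∀ m : ℕ, m ∉ Set.range (fun n : ℕ => 2*n+2) → g m = 0 := by
    intro m hm
    rcases Nat.even_or_odd m with he | ho
    · obtain ⟨k, hk⟩ := he
      rcases Nat.eq_zero_or_pos k with h0 | h0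
      · rw [hg]
        simp only []
        rw [hk, h0]
        simp [aa_zero]
      · exfalso
        exact hm ⟨k - 1, by show 2*(k-1)+2 = m; omega⟩
    · rw [hg]
      simp only []
      rw [ho.neg_one_pow]
      ring
  have hgsum : HasSum ((fun m => g m) ∘ (fun n : ℕ => 2*n+2)) (z0^2 + z1^2) :=
    (Function.Injective.hasSum_iff he_inj hsupp).mpr hAdd
  have := hgsum.mul_left (-4)
  have hterm2 : (fun n : ℕ => ((((-1 : ℝ) ^ n * 9 ^ (n + 1) /
      (((n : ℝ) + 1) ^ 2 * (Nat.choose (4 * (n + 1)) (2 * (n + 1)) : ℝ))) : ℝ) : ℂ))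
      = fun n : ℕ => -4 * ((fun m => g m) ∘ (fun n : ℕ => 2*n+2)) n := by
    funext n
    simp only [Function.comp, hg]
    have hch : (Nat.choose (4 * (n + 1)) (2 * (n + 1)) : ℝ) = (Nat.centralBinom (2*n+2) : ℝ) := by
      rw [Nat.centralBinom]
      congr 2 <;> omega
    have h1 : ((-1:ℂ))^(2*n+2) = 1 := by
      rw [show 2*n+2 = 2*(n+1) by ring, pow_mul]
      norm_num
    have hI : Complex.I^(2*n+2) = (-1:ℂ)^(n+1) := by
      rw [show 2*n+2 = 2*(n+1) by ring, pow_mul, Complex.I_sq]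
    have hmulpow : ((3/4:ℂ)*Complex.I)^(2*n+2) = (3/4:ℂ)^(2*n+2) * (-1:ℂ)^(n+1) := by
      rw [mul_pow, hI]
    have haa : ((aa (2*n+2) : ℝ) : ℂ)
        = (4:ℂ)^(2*n+2) / (2*(((2*n+2:ℕ)):ℂ)^2 * ((Nat.centralBinom (2*n+2) : ℕ):ℂ)) := by
      rw [aa]
      push_cast
      ring
    have h9 : ((9:ℂ))^(n+1) = 3^(2*n+2) := by
      rw [show (9:ℂ) = 3^2 by norm_num, ← pow_mul, show 2*(n+1) = 2*n+2 by ring]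
    have h43 : (4:ℂ)^(2*n+2)*((3:ℂ)/4)^(2*n+2) = 3^(2*n+2) := by
      rw [← mul_pow]
      norm_num
    have hCB : ((Nat.centralBinom (2*n+2) : ℕ):ℂ) ≠ 0 := by
      exact_mod_cast (Nat.centralBinom_pos (2*n+2)).ne'
    have hn1 : ((n:ℂ)+1) ≠ 0 := by
      intro h
      exact (Nat.succ_ne_zero n) (by exact_mod_cast h)
    rw [hch]
    push_cast
    have hn2 : ((2:ℂ)*(n:ℂ)+2) ≠ 0 := by
      have : ((2:ℂ)*(n:ℂ)+2) = 2*((n:ℂ)+1) := by ring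
      rw [this]
      exact mul_ne_zero two_ne_zero hn1
    rw [haa, hmulpow, h1, h9, pow_succ (-1:ℂ) n, div_pow]
    push_cast
    field_simp [hn2]
    ring
  rw [hterm2]
  exact this

end

theorem stmt_3 :
    ∑' n : ℕ, (-1 : ℝ) ^ n * 9 ^ (n + 1) /
      (((n : ℝ) + 1) ^ 2 * (Nat.choose (4 * (n + 1)) (2 * (n + 1)) : ℝ)) =
    -2 * Real.pi ^ 2 / 9 + 2 * (Real.log (2 + Real.sqrt 3)) ^ 2 := by
  have hmain := hasSum_main
  have hre := Complex.hasSum_re hmain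
  simp only [Complex.ofReal_re] at hre
  rw [hre.tsum_eq]
  have hz1 : z1^2 = ((al:ℂ) - (be:ℂ)*Complex.I)^2 := by
    rw [z1, z0, map_add, map_mul, Complex.conj_ofReal, Complex.conj_ofReal, Complex.conj_I]
    ring
  have hval : -4*(z0^2+z1^2) = ((-8*al^2 + 8*be^2 : ℝ) : ℂ) := by
    rw [hz1, z0]
    push_cast
    linear_combination (-8*(be:ℂ)^2) * Complex.I_sq
  rw [hval, Complex.ofReal_re]
  unfold al be
  ring
end

section
/- Σ_{n=1}^∞ (−1)^{n−1} 9^n / (n · C(4n,2n)) = −2√3·π/15 + (4√3/5)·ln(2 + √3). -/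
open MeasureTheory intervalIntegral Real
open scoped ENNReal NNReal

private lemma beta_nat (b a : ℕ) : ∫ x in (0:ℝ)..1, x^a * (1-x)^b
    = (a.factorial * b.factorial : ℝ) / ((a+b+1).factorial) := by
  induction b generalizing a with
  | zero =>
    simp only [pow_zero, mul_one, integral_pow]
    rw [Nat.factorial_succ]
    push_cast
    rw [eq_div_iff (by positivity)]
    field_simp
    simp
  | succ b IH =>
    have hderiv : ∀ x : ℝ, HasDerivAt (fun x : ℝ => x^(a+1) * (1-x)^(b+1))
        ((a+1:ℝ) * x^a * (1-x)^(b+1) - (b+1:ℝ) * (x^(a+1) * (1-x)^b)) x := by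
      intro x
      have h1 : HasDerivAt (fun x : ℝ => x^(a+1)) ((a+1:ℝ) * x^a) x := by
        simpa using hasDerivAt_pow (a+1) x
      have h2 : HasDerivAt (fun x : ℝ => (1-x)^(b+1)) (-((b+1:ℝ) * (1-x)^b)) x := by
        have : HasDerivAt (fun x : ℝ => 1-x) (-1) x := by
          simpa using (hasDerivAt_id x).const_sub 1
        simpa using this.fun_pow (b+1)
      refine (h1.fun_mul h2).congr_deriv ?_
      ring
    have hcont : Continuous fun x : ℝ =>
        (a+1:ℝ) * x^a * (1-x)^(b+1) - (b+1:ℝ) * (x^(a+1) * (1-x)^b) := by fun_prop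
    have key : ∫ x in (0:ℝ)..1,
        ((a+1:ℝ) * x^a * (1-x)^(b+1) - (b+1:ℝ) * (x^(a+1) * (1-x)^b)) = 0 := by
      rw [integral_eq_sub_of_hasDerivAt (fun x _ => hderiv x)
        (hcont.intervalIntegrable 0 1)]
      norm_num
    have i1 : IntervalIntegrable (fun x : ℝ => x^a * (1-x)^(b+1)) volume 0 1 :=
      (by fun_prop : Continuous fun x : ℝ => x^a * (1-x)^(b+1)).intervalIntegrable 0 1
    have i2 : IntervalIntegrable (fun x : ℝ => x^(a+1) * (1-x)^b) volume 0 1 :=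
      (by fun_prop : Continuous fun x : ℝ => x^(a+1) * (1-x)^b).intervalIntegrable 0 1
    have split : (a+1:ℝ) * ∫ x in (0:ℝ)..1, x^a * (1-x)^(b+1)
        = (b+1:ℝ) * ∫ x in (0:ℝ)..1, x^(a+1) * (1-x)^b := by
      have := intervalIntegral.integral_sub ((i1.const_mul ((a+1:ℝ)))) (i2.const_mul ((b+1:ℝ)))
      rw [intervalIntegral.integral_const_mul, intervalIntegral.integral_const_mul] at this
      have key' : (∫ x in (0:ℝ)..1, ((a+1:ℝ) * (x^a * (1-x)^(b+1)) - (b+1:ℝ) * (x^(a+1) * (1-x)^b))) = 0 := by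
        rw [← key]; congr 1; ext x; ring
      rw [key'] at this
      linarith [this]
    have IH' := IH (a+1)
    have hfac : ((a+1+b+1).factorial : ℝ) ≠ 0 := by positivity
    have hfac2 : ((a+(b+1)+1).factorial : ℝ) ≠ 0 := by positivity
    have ha1 : (a+1:ℝ) ≠ 0 := by positivity
    rw [IH'] at split
    have heq : (a+(b+1)+1) = (a+1+b+1) := by ring
    rw [heq]
    rw [eq_div_iff hfac]
    have := split
    field_simp at this ⊢
    push_cast [Nat.factorial_succ] at this ⊢
    nlinarith [this, (show (0:ℝ) < ((a+1+b+1).factorial : ℝ) by positivity)]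

private lemma term_eq (n : ℕ) :
    (-1 : ℝ) ^ n * 9 ^ (n + 1) /
      (((n : ℝ) + 1) * (Nat.choose (4 * (n + 1)) (2 * (n + 1)) : ℝ))
    = ∫ x in (0:ℝ)..1, 18 * x * (1-x)^2 * ((-9) * (x*(1-x))^2)^n := by
  have hrw : ∀ x : ℝ, 18 * x * (1-x)^2 * ((-9) * (x*(1-x))^2)^n
      = (18 * (-9:ℝ)^n) * (x^(2*n+1) * (1-x)^(2*n+2)) := by
    intro x
    rw [mul_pow, ← pow_mul, mul_pow]
    ring
  rw [intervalIntegral.integral_congr (fun x _ => hrw x),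
    intervalIntegral.integral_const_mul, beta_nat]
  have hC := Nat.choose_mul_factorial_mul_factorial
    (show 2*(n+1) ≤ 4*(n+1) by omega)
  have hC' : ((Nat.choose (4*(n+1)) (2*(n+1)) : ℝ)) * (2*n+2).factorial * (2*n+2).factorial
      = ((4*n+4).factorial : ℝ) := by
    have h1 : 4*(n+1) - 2*(n+1) = 2*n+2 := by omega
    have h2 : 2*(n+1) = 2*n+2 := by omega
    have h3 : 4*(n+1) = 4*n+4 := by omega
    rw [h1, h2, h3] at hC
    exact_mod_cast congrArg (Nat.cast : ℕ → ℝ) hC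
  have h9 : ((-9:ℝ))^n = (-1)^n * 9^n := by
    rw [show (-9:ℝ) = -1*9 by norm_num, mul_pow]
  have hfs : (2*n+2).factorial = (2*n+2) * (2*n+1).factorial := Nat.factorial_succ (2*n+1)
  have hidx : (2*n+1) + (2*n+2) + 1 = 4*n+4 := by omega
  rw [hidx, h9]
  have hCpos : (0:ℝ) < (Nat.choose (4*(n+1)) (2*(n+1)) : ℝ) := by
    exact_mod_cast Nat.choose_pos (show 2*(n+1) ≤ 4*(n+1) by omega)
  have hf1 : (0:ℝ) < ((2*n+1).factorial : ℝ) := by positivity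
  have hf2 : (0:ℝ) < ((4*n+4).factorial : ℝ) := by positivity
  have hn1 : (0:ℝ) < (n:ℝ)+1 := by positivity
  rw [mul_div_assoc'] at *
  rw [div_eq_div_iff (by positivity) (by positivity)]
  have hfsR : ((2*n+2).factorial : ℝ) = (2*(n:ℝ)+2) * ((2*n+1).factorial : ℝ) := by
    exact_mod_cast congrArg (Nat.cast : ℕ → ℝ) hfs
  have key : (9:ℝ) * ((4*n+4).factorial : ℝ)
      = 18 * (((2*n+1).factorial : ℝ) * ((2*n+2).factorial : ℝ))
        * (((n:ℝ)+1) * (Nat.choose (4*(n+1)) (2*(n+1)) : ℝ)) := by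
    linear_combination (-9:ℝ)*hC'
      + 9*((Nat.choose (4*(n+1)) (2*(n+1)) : ℝ))*((2*n+2).factorial : ℝ)*hfsR
  linear_combination ((-1:ℝ)^n*9^n) * key

private lemma integral_g :
    ∫ x in (0:ℝ)..1, 18 * x * (1-x)^2 / (1 + 9*(x*(1-x))^2)
    = -2 * Real.sqrt 3 * Real.pi / 15 + (4 * Real.sqrt 3 / 5) * Real.log (2 + Real.sqrt 3) := by
  set s : ℝ := Real.sqrt 3 with hs_def
  have hs : s^2 = 3 := Real.sq_sqrt (by norm_num)
  have hs0 : 0 < s := Real.sqrt_pos.mpr (by norm_num)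
  have hs2 : s < 2 := by nlinarith
  set F : ℝ → ℝ := fun x =>
    (1/2 - s/5) * Real.log (3*x^2 - (3+2*s)*x + (2+s))
    + (1/2 + s/5) * Real.log (3*x^2 - (3-2*s)*x + (2-s))
    - (s/5) * (Real.arctan (2*s*x - s - 2) + Real.arctan (2*s*x - s + 2)) with hF
  have q1pos : ∀ x : ℝ, 0 < 3*x^2 - (3+2*s)*x + (2+s) := by
    intro x; nlinarith [sq_nonneg (6*x - 3 - 2*s)]
  have q2pos : ∀ x : ℝ, 0 < 3*x^2 - (3-2*s)*x + (2-s) := by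
    intro x; nlinarith [sq_nonneg (6*x - 3 + 2*s)]
  have hderiv : ∀ x : ℝ, HasDerivAt F (18 * x * (1-x)^2 / (1 + 9*(x*(1-x))^2)) x := by
    intro x
    have hq1d : HasDerivAt (fun x : ℝ => 3*x^2 - (3+2*s)*x + (2+s))
        (3*(2*x^1) - (3+2*s)*1) x := by
      exact (((hasDerivAt_pow 2 x).const_mul 3).sub
        ((hasDerivAt_id x).const_mul (3+2*s))).add_const (2+s)
    have hq2d : HasDerivAt (fun x : ℝ => 3*x^2 - (3-2*s)*x + (2-s))
        (3*(2*x^1) - (3-2*s)*1) x := by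
      exact (((hasDerivAt_pow 2 x).const_mul 3).sub
        ((hasDerivAt_id x).const_mul (3-2*s))).add_const (2-s)
    have hl1 : HasDerivAt (fun x : ℝ => 2*s*x - s - 2) (2*s) x := by
      simpa using (((hasDerivAt_id x).const_mul (2*s)).sub_const s).sub_const 2
    have hl2 : HasDerivAt (fun x : ℝ => 2*s*x - s + 2) (2*s) x := by
      simpa using (((hasDerivAt_id x).const_mul (2*s)).sub_const s).add_const 2
    have ha1 : HasDerivAt (fun x : ℝ => Real.arctan (2*s*x - s - 2))
        (1/(1+(2*s*x - s - 2)^2) * (2*s)) x :=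
      (Real.hasDerivAt_arctan _).comp x hl1
    have ha2 : HasDerivAt (fun x : ℝ => Real.arctan (2*s*x - s + 2))
        (1/(1+(2*s*x - s + 2)^2) * (2*s)) x :=
      (Real.hasDerivAt_arctan _).comp x hl2
    have hD : HasDerivAt F
        ((1/2 - s/5) * ((3*(2*x^1) - (3+2*s)*1) / (3*x^2 - (3+2*s)*x + (2+s)))
        + (1/2 + s/5) * ((3*(2*x^1) - (3-2*s)*1) / (3*x^2 - (3-2*s)*x + (2-s)))
        - (s/5) * (1/(1+(2*s*x - s - 2)^2) * (2*s) + 1/(1+(2*s*x - s + 2)^2) * (2*s))) x := by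
      exact (((hq1d.log (q1pos x).ne').const_mul _).add
        ((hq2d.log (q2pos x).ne').const_mul _)).sub ((ha1.add ha2).const_mul _)
    convert hD using 1
    have h1t : 1 + (2*s*x - s - 2)^2 = 4*(3*x^2 - (3+2*s)*x + (2+s)) := by
      linear_combination (2*x-1)^2 * hs
    have h2t : 1 + (2*s*x - s + 2)^2 = 4*(3*x^2 - (3-2*s)*x + (2-s)) := by
      linear_combination (2*x-1)^2 * hs
    have hDen : 1 + 9*(x*(1-x))^2
        = (3*x^2 - (3+2*s)*x + (2+s)) * (3*x^2 - (3-2*s)*x + (2-s)) := by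
      linear_combination (2*x-1)^2 * hs
    rw [h1t, h2t, hDen]
    have h1 := (q1pos x).ne'
    have h2 := (q2pos x).ne'
    have h1' : x*(x*3 - (3+2*s)) + (2+s) ≠ 0 := by
      rw [show x*(x*3 - (3+2*s)) + (2+s) = 3*x^2 - (3+2*s)*x + (2+s) by ring]; exact h1
    have h2' : x*(x*3 - (3-2*s)) + (2-s) ≠ 0 := by
      rw [show x*(x*3 - (3-2*s)) + (2-s) = 3*x^2 - (3-2*s)*x + (2-s) by ring]; exact h2
    field_simp
    have hs3 : s^3 = 3*s := by linear_combination s*hs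
    have hs4 : s^4 = 9 := by linear_combination (s^2+3)*hs
    have hs5 : s^5 = 9*s := by linear_combination (s^3+3*s)*hs
    have hs6 : s^6 = 27 := by linear_combination (s^4+3*s^2+9)*hs
    have hs7 : s^7 = 27*s := by linear_combination (s^5+3*s^3+9*s)*hs
    have hs8 : s^8 = 81 := by linear_combination (s^6+3*s^4+9*s^2+27)*hs
    ring_nf
    simp only [hs, hs3, hs4, hs5, hs6, hs7, hs8]
    ring
  have hcont : Continuous fun x : ℝ => 18 * x * (1-x)^2 / (1 + 9*(x*(1-x))^2) := by
    apply Continuous.div (by fun_prop) (by fun_prop)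
    intro x; positivity
  rw [integral_eq_sub_of_hasDerivAt (fun x _ => hderiv x) (hcont.intervalIntegrable 0 1)]
  rw [hF]
  simp only
  have v1 : (3*(1:ℝ)^2 - (3+2*s)*1 + (2+s)) = 2 - s := by ring
  have v2 : (3*(1:ℝ)^2 - (3-2*s)*1 + (2-s)) = 2 + s := by ring
  have v3 : (3*(0:ℝ)^2 - (3+2*s)*0 + (2+s)) = 2 + s := by ring
  have v4 : (3*(0:ℝ)^2 - (3-2*s)*0 + (2-s)) = 2 - s := by ring
  have w1 : (2*s*(1:ℝ) - s - 2) = s - 2 := by ring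
  have w2 : (2*s*(1:ℝ) - s + 2) = s + 2 := by ring
  have w3 : (2*s*(0:ℝ) - s - 2) = -(s + 2) := by ring
  have w4 : (2*s*(0:ℝ) - s + 2) = -(s - 2) := by ring
  rw [v1, v2, v3, v4, w1, w2, w3, w4, Real.arctan_neg, Real.arctan_neg]
  have h2p : (2:ℝ) + s ≠ 0 := by positivity
  have h2m : (2:ℝ) - s ≠ 0 := by nlinarith
  have hlog : Real.log (2 - s) = - Real.log (2 + s) := by
    have hmul : Real.log (2 - s) + Real.log (2 + s) = Real.log ((2-s)*(2+s)) :=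
      (Real.log_mul h2m h2p).symm
    have hone : (2-s)*(2+s) = 1 := by linear_combination -hs
    rw [hone, Real.log_one] at hmul
    linarith
  have harc : Real.arctan (s - 2) + Real.arctan (s + 2) = Real.pi / 3 := by
    have hmul : (s-2)*(s+2) < 1 := by nlinarith
    rw [Real.arctan_add hmul]
    have hden : (1 - (s-2)*(s+2)) = 2 := by linear_combination -hs
    rw [hden]
    have harg : ((s-2) + (s+2))/2 = s := by ring
    rw [harg, hs_def, ← Real.tan_pi_div_three, Real.arctan_tan]
    · linarith [Real.pi_pos]
    · linarith [Real.pi_pos]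
  linear_combination (-2*s/5) * hlog + (-2*s/5) * harc

theorem stmt_4 :
    ∑' n : ℕ, (-1 : ℝ) ^ n * 9 ^ (n + 1) /
      (((n : ℝ) + 1) * (Nat.choose (4 * (n + 1)) (2 * (n + 1)) : ℝ)) =
    -2 * Real.sqrt 3 * Real.pi / 15 + (4 * Real.sqrt 3 / 5) * Real.log (2 + Real.sqrt 3) := by
  set μ : Measure ℝ := volume.restrict (Set.Ioc (0:ℝ) 1) with hμ
  set f : ℕ → ℝ → ℝ := fun n x => 18 * x * (1-x)^2 * ((-9) * (x*(1-x))^2)^n with hf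
  have hcont : ∀ n, Continuous (f n) := by intro n; rw [hf]; fun_prop
  have hmeas : ∀ n, AEStronglyMeasurable (f n) μ := fun n => (hcont n).aestronglyMeasurable
  have hbound : ∀ n : ℕ, ∀ x ∈ Set.Ioc (0:ℝ) 1,
      (‖f n x‖₊ : ℝ≥0∞) ≤ ENNReal.ofReal ((9/2) * (9/16)^n) := by
    intro n x hx
    obtain ⟨hx0, hx1⟩ := hx
    rw [← enorm_eq_nnnorm, ← ofReal_norm]
    apply ENNReal.ofReal_le_ofReal
    rw [hf]
    simp only
    rw [Real.norm_eq_abs, abs_mul, abs_pow]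
    have h1 : |18 * x * (1-x)^2| ≤ 9/2 := by
      rw [abs_of_nonneg (by nlinarith)]
      nlinarith [sq_nonneg (2*x-1), sq_nonneg (1-x), sq_nonneg x]
    have h2 : |(-9) * (x*(1-x))^2| ≤ 9/16 := by
      rw [abs_of_nonpos (by nlinarith [sq_nonneg (x*(1-x))])]
      nlinarith [sq_nonneg (2*x-1), sq_nonneg ((2*x-1)*(2*x+1))]
    exact mul_le_mul h1 (pow_le_pow_left₀ (abs_nonneg _) h2 n) (by positivity) (by norm_num)
  have hper : ∀ n : ℕ, ∫⁻ x, ‖f n x‖₊ ∂μ ≤ ENNReal.ofReal ((9/2) * (9/16)^n) := by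
    intro n
    calc ∫⁻ x, ‖f n x‖₊ ∂μ
        ≤ ∫⁻ _, ENNReal.ofReal ((9/2) * (9/16)^n) ∂μ := by
          apply lintegral_mono_ae
          rw [hμ]
          exact (ae_restrict_iff' measurableSet_Ioc).mpr (ae_of_all _ (hbound n))
      _ = ENNReal.ofReal ((9/2) * (9/16)^n) := by
          rw [lintegral_const, hμ, Measure.restrict_apply_univ, Real.volume_Ioc]
          norm_num
  have hfin : ∑' n, ∫⁻ x, ‖f n x‖₊ ∂μ ≠ ⊤ := by
    apply ne_top_of_le_ne_top _ (ENNReal.tsum_le_tsum hper)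
    have heq : ∀ n : ℕ, ENNReal.ofReal ((9/2) * (9/16)^n)
        = ENNReal.ofReal (9/2) * (ENNReal.ofReal (9/16))^n := by
      intro n
      rw [ENNReal.ofReal_mul (by norm_num), ENNReal.ofReal_pow (by norm_num)]
    rw [tsum_congr heq, ENNReal.tsum_mul_left, ENNReal.tsum_geometric]
    apply ENNReal.mul_ne_top ENNReal.ofReal_ne_top
    rw [ENNReal.inv_ne_top]
    apply ne_of_gt
    rw [tsub_pos_iff_lt]
    exact ENNReal.ofReal_lt_one.mpr (by norm_num)
  have hswap := MeasureTheory.integral_tsum hmeas hfin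
  have hterm : ∀ n : ℕ, (-1 : ℝ) ^ n * 9 ^ (n + 1) /
      (((n : ℝ) + 1) * (Nat.choose (4 * (n + 1)) (2 * (n + 1)) : ℝ)) = ∫ x, f n x ∂μ := by
    intro n
    rw [term_eq n, intervalIntegral.integral_of_le zero_le_one, hμ]
  rw [tsum_congr hterm, ← hswap]
  have hsum : ∀ x ∈ Set.Ioc (0:ℝ) 1,
      ∑' n, f n x = 18 * x * (1-x)^2 / (1 + 9*(x*(1-x))^2) := by
    intro x hx
    obtain ⟨hx0, hx1⟩ := hx
    have hr : ‖(-9) * (x*(1-x))^2‖ < 1 := by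
      rw [Real.norm_eq_abs, abs_of_nonpos (by nlinarith [sq_nonneg (x*(1-x))])]
      nlinarith [sq_nonneg (2*x-1), sq_nonneg ((2*x-1)*(2*x+1))]
    rw [hf]
    simp only
    rw [tsum_mul_left, tsum_geometric_of_norm_lt_one hr,
      show (1:ℝ) - (-9) * (x*(1-x))^2 = 1 + 9*(x*(1-x))^2 from by ring, div_eq_mul_inv]
  rw [hμ]
  rw [setIntegral_congr_fun measurableSet_Ioc hsum]
  rw [← intervalIntegral.integral_of_le zero_le_one, integral_g]
end

section
/- Σ_{n=1}^∞ (−1)^{n−1} (16/3)^n / C(4n,2n) = 1/4 + (√6/8)·ln(√2 + √3). -/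
open intervalIntegral Complex in
lemma beta_int (k : ℕ) : ∫ x in (0:ℝ)..1, (x*(1-x))^k
    = 1/(((2*k+1) * (Nat.choose (2*k) k) : ℕ) : ℝ) := by
  have h1 : Complex.betaIntegral (k+1) (k+1)
      = ((∫ x in (0:ℝ)..1, (x*(1-x))^k : ℝ) : ℂ) := by
    rw [Complex.betaIntegral, ← intervalIntegral.integral_ofReal]
    apply intervalIntegral.integral_congr
    intro x hx
    push_cast [mul_pow]
    rw [add_sub_cancel_right, Complex.cpow_natCast, Complex.cpow_natCast]
  have h2 := Complex.Gamma_mul_Gamma_eq_betaIntegral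
      (s := (k:ℂ)+1) (t := (k:ℂ)+1) (by simp; positivity) (by simp; positivity)
  rw [h1] at h2
  have hg1 : Complex.Gamma ((k:ℂ)+1) = ((Nat.factorial k : ℕ) : ℂ) := Complex.Gamma_nat_eq_factorial k
  have hg2 : Complex.Gamma ((k:ℂ)+1+((k:ℂ)+1)) = (Nat.factorial (2*k+1)) := by
    have : ((k:ℂ)+1+((k:ℂ)+1)) = ((2*k+1 : ℕ):ℂ)+1 := by push_cast; ring
    rw [this, Complex.Gamma_nat_eq_factorial]
  rw [hg1, hg2] at h2
  have h3 : ((Nat.factorial k) * (Nat.factorial k) : ℝ) = (Nat.factorial (2*k+1)) * (∫ x in (0:ℝ)..1, (x*(1-x))^k) := by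
    exact_mod_cast h2
  have hc : (Nat.choose (2*k) k) * (Nat.factorial k) * (Nat.factorial k) = (Nat.factorial (2*k)) := by
    have := Nat.choose_mul_factorial_mul_factorial (show k ≤ 2*k by omega)
    simpa [two_mul, Nat.add_sub_cancel] using this
  have hfactN : Nat.factorial (2*k+1) = (2*k+1) * ((Nat.choose (2*k) k) * (Nat.factorial k) * (Nat.factorial k)) := by
    rw [hc]; exact Nat.factorial_succ (2*k)
  have hkpos : (0:ℝ) < (Nat.factorial k) := by positivity
  have hcpos : (0:ℝ) < (Nat.choose (2*k) k : ℝ) := by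
    exact_mod_cast Nat.choose_pos (show k ≤ 2*k by omega)
  have h2k1 : (0:ℝ) < ((2*k+1 : ℕ) : ℝ) := by positivity
  rw [hfactN] at h3
  push_cast at h3 ⊢
  have hne : ((2*(k:ℝ)+1) * ((Nat.choose (2*k) k : ℕ) : ℝ)) ≠ 0 := by positivity
  rw [eq_div_iff hne]
  have hF : ((Nat.factorial k : ℕ):ℝ) * ((Nat.factorial k : ℕ):ℝ) ≠ 0 := by positivity
  apply mul_right_cancel₀ hF
  push_cast
  linear_combination -h3


lemma pt_sum (x : ℝ) (hx : x ∈ Set.uIcc (0:ℝ) 1) :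
    (∑' n:ℕ, -((4*(n:ℝ)+5) * (-(16/3)*(x*(1-x))^2)^(n+1)))
    = 1 + 9/(16*x^4-32*x^3+16*x^2+3) - 36/(16*x^4-32*x^3+16*x^2+3)^2 := by
  rw [Set.uIcc_of_le (by norm_num : (0:ℝ) ≤ 1)] at hx
  obtain ⟨hx0, hx1⟩ := hx
  set w : ℝ := -(16/3)*(x*(1-x))^2 with hw
  have hu2 : (x*(1-x))^2 ≤ 1/16 := by nlinarith [sq_nonneg (x - 1/2), mul_nonneg hx0 (by linarith : (0:ℝ) ≤ 1 - x)]
  have hwle : ‖w‖ < 1 := by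
    rw [Real.norm_eq_abs, hw, abs_mul]
    rw [abs_of_nonpos (by norm_num : -(16/3 : ℝ) ≤ 0), abs_of_nonneg (sq_nonneg _)]
    nlinarith
  have hwnonpos : w ≤ 0 := by nlinarith [sq_nonneg (x*(1-x))]
  have h1 : HasSum (fun n : ℕ => w^n) (1-w)⁻¹ := hasSum_geometric_of_norm_lt_one hwle
  have h2 : HasSum (fun n : ℕ => (n:ℝ)*w^n) (w/(1-w)^2) :=
    hasSum_coe_mul_geometric_of_norm_lt_one hwle
  have h3 : HasSum (fun n : ℕ => 4*((n:ℝ)*w^n) + w^n) (4*(w/(1-w)^2) + (1-w)⁻¹) :=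
    (h2.mul_left 4).add h1
  have h4 : HasSum (fun n : ℕ => 4*(((n+1:ℕ):ℝ)*w^(n+1)) + w^(n+1))
      ((4*(w/(1-w)^2) + (1-w)⁻¹) - 1) := by
    refine (hasSum_nat_add_iff (f := fun n : ℕ => 4*((n:ℝ)*w^n) + w^n) 1).mpr ?_
    convert h3 using 1
    · rfl
    simp
  have h5 := h4.neg
  have hfun : (fun n:ℕ => -((4*(n:ℝ)+5) * w^(n+1)))
      = fun n : ℕ => -(4*(((n+1:ℕ):ℝ)*w^(n+1)) + w^(n+1)) := by
    funext n; push_cast; ring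
  rw [hfun, h5.tsum_eq]
  have hP : (16*x^4-32*x^3+16*x^2+3) = 3*(1-w) := by rw [hw]; ring
  have h1w : (1:ℝ) - w ≠ 0 := by nlinarith
  rw [hP]
  field_simp
  ring


set_option maxHeartbeats 1000000 in
open Real in
lemma ftc_part :
    ∫ x in (0:ℝ)..1, (1 + 9/(16*x^4-32*x^3+16*x^2+3) - 36/(16*x^4-32*x^3+16*x^2+3)^2)
    = 1/4 + (Real.sqrt 6/8) * Real.log (Real.sqrt 2 + Real.sqrt 3) := by
  set q : ℝ := Real.sqrt 6 with hqdef
  have hq2 : q^2 = 6 := Real.sq_sqrt (by norm_num)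
  have hq0 : 0 ≤ q := Real.sqrt_nonneg 6
  have hq3 : q < 3 := by nlinarith
  set F : ℝ → ℝ := fun y => y + q/32 * (Real.log (2*(y-1/2)^2 + q*(y-1/2) + 1)
      - Real.log (2*(y-1/2)^2 - q*(y-1/2) + 1))
      - 3/8 * (((y-1/2)*(2*(y-1/2)^2+1)) / (4*(y-1/2)^4-2*(y-1/2)^2+1)) with hF
  have key : ∀ x : ℝ, HasDerivAt F
      (1 + 9/(16*x^4-32*x^3+16*x^2+3) - 36/(16*x^4-32*x^3+16*x^2+3)^2) x := by
    intro x
    have hs : HasDerivAt (fun y:ℝ => y - 1/2) 1 x := (hasDerivAt_id x).sub_const _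
    set s : ℝ := x - 1/2 with hsdef
    have hApos : 0 < 2*s^2 + q*s + 1 := by nlinarith [sq_nonneg (4*s+q)]
    have hBpos : 0 < 2*s^2 - q*s + 1 := by nlinarith [sq_nonneg (4*s-q)]
    have hDpos : 0 < 4*s^4 - 2*s^2 + 1 := by nlinarith [sq_nonneg (2*s^2 - 1/2)]
    have hA : HasDerivAt (fun y:ℝ => 2*(y-1/2)^2 + q*(y-1/2) + 1) (4*s + q) x := by
      have h := (((hs.pow 2).const_mul 2).add (hs.const_mul q)).add_const 1
      refine h.congr_deriv ?_; simp [hsdef]; ring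
    have hB : HasDerivAt (fun y:ℝ => 2*(y-1/2)^2 - q*(y-1/2) + 1) (4*s - q) x := by
      have h := (((hs.pow 2).const_mul 2).sub (hs.const_mul q)).add_const 1
      refine h.congr_deriv ?_; simp [hsdef]; ring
    have hA0 : (2*s^2 + q*s + 1) ≠ 0 := ne_of_gt hApos
    have hB0 : (2*s^2 - q*s + 1) ≠ 0 := ne_of_gt hBpos
    have hD0 : (4*s^4 - 2*s^2 + 1) ≠ 0 := ne_of_gt hDpos
    have hApos' : 2*(x-1/2)^2 + q*(x-1/2) + 1 ≠ 0 := by rw [← hsdef]; exact hA0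
    have hBpos' : 2*(x-1/2)^2 - q*(x-1/2) + 1 ≠ 0 := by rw [← hsdef]; exact hB0
    have hlog : HasDerivAt (fun y:ℝ => q/32 * (Real.log (2*(y-1/2)^2 + q*(y-1/2) + 1)
        - Real.log (2*(y-1/2)^2 - q*(y-1/2) + 1)))
        (3/8 * (1-2*s^2) / (4*s^4-2*s^2+1)) x := by
      have h := ((hA.log hApos').sub (hB.log hBpos')).const_mul (q/32)
      refine (h.congr_deriv ?_); symm
      have harg1 : 2*(x-1/2)^2 + q*(x-1/2) + 1 = 2*s^2 + q*s + 1 := by rw [← hsdef]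
      have harg2 : 2*(x-1/2)^2 - q*(x-1/2) + 1 = 2*s^2 - q*s + 1 := by rw [← hsdef]
      rw [harg1, harg2, div_sub_div _ _ hA0 hB0]
      have hnum : (4*s+q)*(2*s^2 - q*s + 1) - (2*s^2 + q*s + 1)*(4*s-q) = q*(2-4*s^2) := by
        ring
      have hAB : (2*s^2 + q*s + 1)*(2*s^2 - q*s + 1) = 4*s^4-2*s^2+1 := by
        linear_combination (-(s^2))*hq2
      rw [hnum, hAB]
      rw [show q/32 * (q*(2-4*s^2)/(4*s^4-2*s^2+1)) = (q*q)*((2-4*s^2)/32)/(4*s^4-2*s^2+1) from by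
        ring, show q*q = 6 from by nlinarith]
      congr 1
      ring
    have hN : HasDerivAt (fun y:ℝ => (y-1/2)*(2*(y-1/2)^2+1)) (6*s^2+1) x := by
      have h := hs.mul (((hs.pow 2).const_mul 2).add_const 1)
      refine h.congr_deriv ?_; simp [hsdef]; ring
    have hD : HasDerivAt (fun y:ℝ => 4*(y-1/2)^4-2*(y-1/2)^2+1) (16*s^3-4*s) x := by
      have h := (((hs.pow 4).const_mul 4).sub ((hs.pow 2).const_mul 2)).add_const 1
      refine h.congr_deriv ?_; simp [hsdef]; ring
    have hD0' : (4*(x-1/2)^4-2*(x-1/2)^2+1) ≠ 0 := by rw [← hsdef]; exact hD0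
    have hrat := (hN.div hD hD0').const_mul (3/8 : ℝ)
    have htot := ((hasDerivAt_id x).add hlog).sub hrat
    refine htot.congr_deriv ?_; symm
    rw [← hsdef]
    have hPs : 16*x^4-32*x^3+16*x^2+3 = 4*(4*s^4-2*s^2+1) := by rw [hsdef]; ring
    rw [hPs]
    generalize hDD : 4*s^4 - 2*s^2 + 1 = D at *
    field_simp
    rw [← hDD]
    ring
  have hPpos : ∀ x : ℝ, (0:ℝ) < 16*x^4-32*x^3+16*x^2+3 := by
    intro x; nlinarith [sq_nonneg (x*(x-1)), sq_nonneg x]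
  have hcont : Continuous (fun x : ℝ =>
      1 + 9/(16*x^4-32*x^3+16*x^2+3) - 36/(16*x^4-32*x^3+16*x^2+3)^2) := by
    have hP : Continuous (fun x : ℝ => 16*x^4-32*x^3+16*x^2+3) := by continuity
    refine (continuous_const.add (continuous_const.div hP fun x => ne_of_gt (hPpos x))).sub
      (continuous_const.div (hP.pow 2) fun x => pow_ne_zero 2 (ne_of_gt (hPpos x)))
  rw [intervalIntegral.integral_eq_sub_of_hasDerivAt (fun x _ => key x)
    (hcont.intervalIntegrable 0 1)]
  -- now evaluate F 1 - F 0
  rw [hF]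
  simp only []
  have e1 : 2*((1:ℝ)-1/2)^2 + q*((1:ℝ)-1/2) + 1 = (3+q)/2 := by ring
  have e2 : 2*((1:ℝ)-1/2)^2 - q*((1:ℝ)-1/2) + 1 = (3-q)/2 := by ring
  have e3 : 2*((0:ℝ)-1/2)^2 + q*((0:ℝ)-1/2) + 1 = (3-q)/2 := by ring
  have e4 : 2*((0:ℝ)-1/2)^2 - q*((0:ℝ)-1/2) + 1 = (3+q)/2 := by ring
  rw [e1, e2, e3, e4]
  have hp1 : (0:ℝ) < 3 + q := by linarith
  have hp2 : (0:ℝ) < 3 - q := by linarith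
  have hlq1 : Real.log ((3+q)/2) = Real.log (3+q) - Real.log 2 :=
    Real.log_div (by linarith) (by norm_num)
  have hlq2 : Real.log ((3-q)/2) = Real.log (3-q) - Real.log 2 :=
    Real.log_div (by linarith) (by norm_num)
  rw [hlq1, hlq2]
  have hst : (0:ℝ) < Real.sqrt 2 + Real.sqrt 3 := by positivity
  have hsq : (Real.sqrt 2 + Real.sqrt 3)^2 = 5 + 2*q := by
    have h2 : Real.sqrt 2^2 = 2 := Real.sq_sqrt (by norm_num)
    have h3 : Real.sqrt 3^2 = 3 := Real.sq_sqrt (by norm_num)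
    have h23 : Real.sqrt 2 * Real.sqrt 3 = q := by
      rw [hqdef, ← Real.sqrt_mul (by norm_num : (0:ℝ) ≤ 2)]; norm_num
    linear_combination h2 + h3 + 2*h23
  have hkey : (3 - q)*(Real.sqrt 2 + Real.sqrt 3)^2 = 3 + q := by
    rw [hsq]; linear_combination (-2 : ℝ)*hq2
  have hlog36 : Real.log (3+q) = Real.log (3-q) + 2 * Real.log (Real.sqrt 2 + Real.sqrt 3) := by
    rw [← hkey, Real.log_mul (by linarith) (by positivity), Real.log_pow]
    norm_num
  rw [hlog36]
  norm_num
  ring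

theorem stmt_14 :
    ∑' n : ℕ, (-1 : ℝ) ^ n * (16 / 3) ^ (n + 1) /
      (Nat.choose (4 * (n + 1)) (2 * (n + 1)) : ℝ) =
    1 / 4 + (Real.sqrt 6 / 8) * Real.log (Real.sqrt 2 + Real.sqrt 3) := by
  set cf : ℕ → C(ℝ,ℝ) := fun n =>
    ⟨fun x => -((4*(n:ℝ)+5) * (-(16/3)*(x*(1-x))^2)^(n+1)), by fun_prop⟩ with hcf
  have hbound : ∀ n : ℕ, ∀ x ∈ Set.uIcc (0:ℝ) 1,
      ‖cf n x‖ ≤ (4*(n:ℝ)+5) * (1/3)^(n+1) := by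
    intro n x hx
    rw [Set.uIcc_of_le (by norm_num : (0:ℝ) ≤ 1)] at hx
    obtain ⟨hx0, hx1⟩ := hx
    have hu2 : (x*(1-x))^2 ≤ 1/16 := by
      nlinarith [sq_nonneg (x - 1/2), mul_nonneg hx0 (by linarith : (0:ℝ) ≤ 1 - x)]
    have habs : |(-(16/3:ℝ)*(x*(1-x))^2)| ≤ 1/3 := by
      rw [abs_mul, abs_of_nonpos (by norm_num : -(16/3 : ℝ) ≤ 0), abs_of_nonneg (sq_nonneg _)]
      nlinarith
    simp only [hcf, ContinuousMap.coe_mk, Real.norm_eq_abs, abs_neg, abs_mul]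
    rw [abs_pow]
    have h1 : |4*(n:ℝ)+5| = 4*(n:ℝ)+5 := abs_of_pos (by positivity)
    rw [h1]
    gcongr

  have hsum : Summable fun n : ℕ =>
      ‖(cf n).restrict (⟨Set.uIcc (0:ℝ) 1, isCompact_uIcc⟩ : TopologicalSpace.Compacts ℝ)‖ := by
    have h13 : ‖(1/3 : ℝ)‖ < 1 := by
      rw [Real.norm_eq_abs, abs_of_nonneg (by norm_num : (0:ℝ) ≤ 1/3)]
      norm_num
    have hS : Summable fun n : ℕ => (4*(n:ℝ)+5) * (1/3)^(n+1) := by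
      have hg : Summable fun n : ℕ => ((1:ℝ)/3)^n :=
        (hasSum_geometric_of_norm_lt_one h13).summable
      have hng : Summable fun n : ℕ => (n:ℝ)^1 * ((1:ℝ)/3)^n :=
        summable_pow_mul_geometric_of_norm_lt_one 1 h13
      have := ((hng.mul_left (4/3)).add (hg.mul_left (5/3)))
      refine this.congr fun n => ?_
      rw [pow_succ]
      ring
    refine Summable.of_nonneg_of_le (fun n => norm_nonneg _) (fun n => ?_) hS
    refine (ContinuousMap.norm_le _ (by positivity)).mpr ?_
    rintro ⟨x, hx⟩
    rw [ContinuousMap.restrict_apply]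
    exact hbound n x hx
  have hswap := intervalIntegral.tsum_intervalIntegral_eq_of_summable_norm (a := (0:ℝ)) (b := 1)
    hsum
  have hterm : ∀ n : ℕ, (-1 : ℝ) ^ n * (16 / 3) ^ (n + 1) /
      (Nat.choose (4 * (n + 1)) (2 * (n + 1)) : ℝ) = ∫ x in (0:ℝ)..1, cf n x := by
    intro n
    have hfun : (fun x : ℝ => (cf n) x)
        = fun x : ℝ => (-((4*(n:ℝ)+5) * (-(16/3:ℝ))^(n+1))) * (x*(1-x))^(2*(n+1)) := by
      funext x
      simp only [hcf, ContinuousMap.coe_mk]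
      rw [mul_pow, ← pow_mul]
      ring
    rw [hfun, intervalIntegral.integral_const_mul, beta_int (2*(n+1)),
      show 2*(2*(n+1)) = 4*(n+1) from by ring]
    have hC : (0:ℝ) < (Nat.choose (4*(n+1)) (2*(n+1)) : ℝ) := by
      exact_mod_cast Nat.choose_pos (by omega)
    have h45 : ((2*(2*(n+1))+1 : ℕ) : ℝ) = 4*(n:ℝ)+5 := by push_cast; ring
    push_cast
    have hneg : (-(16/3:ℝ))^(n+1) = -((-1:ℝ)^n * (16/3)^(n+1)) := by
      rw [neg_pow, pow_succ]
      ring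
    rw [hneg]
    field_simp
    ring
  calc ∑' n : ℕ, (-1 : ℝ) ^ n * (16 / 3) ^ (n + 1) /
      (Nat.choose (4 * (n + 1)) (2 * (n + 1)) : ℝ)
      = ∑' n : ℕ, ∫ x in (0:ℝ)..1, cf n x := tsum_congr hterm
    _ = ∫ x in (0:ℝ)..1, ∑' n : ℕ, cf n x := hswap
    _ = ∫ x in (0:ℝ)..1, (1 + 9/(16*x^4-32*x^3+16*x^2+3)
          - 36/(16*x^4-32*x^3+16*x^2+3)^2) := by
        refine intervalIntegral.integral_congr fun x hx => ?_
        simp only [hcf, ContinuousMap.coe_mk]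
        exact pt_sum x hx
    _ = 1/4 + (Real.sqrt 6/8) * Real.log (Real.sqrt 2 + Real.sqrt 3) := ftc_part
end

section
/- Σ_{n=0}^∞ (−1/3)^n / ((2n+1)² · C(4n+2,2n+1)) = (π/(4√3))·ln 3. -/
open Real MeasureTheory Set Filter intervalIntegral Topology

namespace St17

noncomputable def q1 (t : ℝ) : ℝ := t^2 + t + 1
noncomputable def q2 (t : ℝ) : ℝ := t^2 - 3*t + 3
noncomputable def hh (t : ℝ) : ℝ := arctan ((t - t^2) / √3)
noncomputable def ww (t : ℝ) : ℝ := log t - log (1 - t)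
noncomputable def GG (t : ℝ) : ℝ := (√3/2) * hh t * (1/t + 1/(1-t))
noncomputable def ff (n : ℕ) (t : ℝ) : ℝ := (1/2) * (-1/3 : ℝ)^n * (t*(1-t))^(2*n) / (2*n+1)
noncomputable def ps (t : ℝ) : ℝ := (log (1-t) - log t) / q1 t
noncomputable def uu (n : ℕ) : ℝ := 1 / (n + 3)
noncomputable def phi (t : ℝ) : ℝ := (1 - t) / (1 + 2*t)

lemma sqrt3_pos : 0 < √3 := Real.sqrt_pos.mpr (by norm_num)
lemma sq_sqrt3 : √3 ^ 2 = 3 := Real.sq_sqrt (by norm_num)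
lemma q1_pos (t : ℝ) : 0 < q1 t := by unfold q1; nlinarith [sq_nonneg (t + 1/2)]
lemma q2_pos (t : ℝ) : 0 < q2 t := by unfold q2; nlinarith [sq_nonneg (t - 3/2)]
lemma q1_reflect (t : ℝ) : q1 (1 - t) = q2 t := by unfold q1 q2; ring
lemma arctan_le_self' {x : ℝ} (hx : 0 ≤ x) : arctan x ≤ x := by
  have h1 : 0 ≤ arctan x := by
    rw [← Real.arctan_zero]
    exact Real.arctan_strictMono.monotone hx
  have := Real.le_tan h1 (Real.arctan_lt_pi_div_two x)
  rwa [Real.tan_arctan] at this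
lemma hh_reflect (t : ℝ) : hh (1 - t) = hh t := by unfold hh; ring_nf
lemma hh_bound {t : ℝ} (h : t ∈ Icc (0:ℝ) 1) : 0 ≤ hh t ∧ hh t ≤ (t - t^2)/√3 := by
  obtain ⟨h0, h1⟩ := h
  have hy : 0 ≤ (t - t^2)/√3 := by
    apply div_nonneg _ sqrt3_pos.le
    nlinarith
  refine ⟨?_, arctan_le_self' hy⟩
  rw [hh, ← Real.arctan_zero]
  exact Real.arctan_strictMono.monotone hy
lemma hh_deriv (t : ℝ) : HasDerivAt hh ((√3/2) * (1/q1 t - 1/q2 t)) t := by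
  have h1 : HasDerivAt (fun t : ℝ => (t - t^2)/√3) ((1 - 2*t)/√3) t := by
    have := ((hasDerivAt_id t).sub ((hasDerivAt_pow 2 t))).div_const √3
    simpa using this
  have h2 := (Real.hasDerivAt_arctan ((t - t^2)/√3)).comp t h1
  refine h2.congr_deriv (Eq.symm ?_)
  show (√3/2) * (1/q1 t - 1/q2 t) = 1 / (1 + ((t - t^2)/√3)^2) * ((1 - 2*t)/√3)
  have hq1 := q1_pos t
  have hq2 := q2_pos t
  have hs := sqrt3_pos
  have h4 : 1 + ((t - t^2)/√3)^2 = (3 + (t - t^2)^2)/3 := by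
    rw [div_pow, sq_sqrt3]; ring
  have hrs : (1 - 2*t)/√3 = √3 * (1 - 2*t) / 3 := by
    rw [div_eq_div_iff hs.ne' (by norm_num : (3:ℝ) ≠ 0)]
    linear_combination (2*t - 1) * sq_sqrt3
  have key : q1 t * q2 t = 3 + (t - t^2)^2 := by unfold q1 q2; ring
  have hpos : (0:ℝ) < 3 + (t - t^2)^2 := by positivity
  rw [h4, hrs, ← key]
  unfold q1 q2
  have e1 : t^2 + t + 1 ≠ 0 := by positivity
  have e2 : t^2 - 3*t + 3 ≠ 0 := ne_of_gt (by nlinarith [sq_nonneg (t - 3/2)])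
  rw [div_sub_div _ _ e1 e2, div_div_eq_mul_div]
  field_simp
  ring
lemma ww_deriv {t : ℝ} (h : t ∈ Ioo (0:ℝ) 1) : HasDerivAt ww (1/t + 1/(1-t)) t := by
  obtain ⟨h0, h1⟩ := h
  have hl : HasDerivAt log (1/t) t := by simpa [one_div] using Real.hasDerivAt_log (ne_of_gt h0)
  have h2 : HasDerivAt (fun t : ℝ => log (1 - t)) (-(1/(1-t))) t := by
    have hi : HasDerivAt (fun t : ℝ => 1 - t) (-1) t := by
      simpa using (hasDerivAt_id t).const_sub (1:ℝ)
    have := (Real.hasDerivAt_log (by linarith : (1:ℝ) - t ≠ 0)).comp t hi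
    refine this.congr_deriv ?_
    field_simp
  have h3 := hl.sub h2
  rw [sub_neg_eq_add] at h3
  exact h3
lemma ww_reflect (t : ℝ) : ww (1 - t) = - ww t := by unfold ww; ring_nf
lemma uu_mem (n : ℕ) : 0 < uu n ∧ uu n < 1/2 := by
  unfold uu
  constructor
  · positivity
  · rw [div_lt_div_iff₀ (by positivity) (by norm_num)]
    have : (0:ℝ) ≤ n := Nat.cast_nonneg n
    linarith
lemma uu_tendsto : Tendsto uu atTop (𝓝 0) := by
  have h : Tendsto (fun n : ℕ => ((n:ℝ) + 3)) atTop atTop :=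
    tendsto_atTop_add_const_right _ 3 tendsto_natCast_atTop_atTop
  have h2 := h.inv_tendsto_atTop
  refine h2.congr fun n => ?_
  simp [uu, one_div]

lemma tendsto_II {f : ℝ → ℝ} (hf : IntegrableOn f (Ioo 0 1)) {a b : ℕ → ℝ}
    (ha0 : Tendsto a atTop (𝓝 0)) (hb1 : Tendsto b atTop (𝓝 1))
    (hab : ∀ n, 0 < a n ∧ a n ≤ b n ∧ b n < 1) :
    Tendsto (fun n => ∫ t in (a n)..(b n), f t) atTop (𝓝 (∫ t in Ioo (0:ℝ) 1, f t)) := by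
  have cover : AECover (volume.restrict (Ioo (0:ℝ) 1)) atTop (fun n => Ioc (a n) (b n)) :=
    aecover_Ioo_of_Ioc ha0 hb1
  have h := cover.integral_tendsto_of_countably_generated hf
  refine h.congr fun n => ?_
  have hsub : Ioc (a n) (b n) ⊆ Ioo (0:ℝ) 1 := fun x hx =>
    ⟨lt_of_lt_of_le (hab n).1 (le_of_lt hx.1), lt_of_le_of_lt hx.2 (hab n).2.2⟩
  rw [Measure.restrict_restrict measurableSet_Ioc, inter_eq_left.mpr hsub,
    intervalIntegral.integral_of_le (hab n).2.1]

lemma integrableOn_log01 : IntegrableOn Real.log (Ioo 0 1) := by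
  have hb : IntegrableOn (fun t : ℝ => 2 * t ^ (-(1:ℝ)/2)) (Ioo 0 1) := by
    have h1 : IntervalIntegrable (fun t : ℝ => t ^ (-(1:ℝ)/2)) volume 0 1 := by
      apply intervalIntegral.intervalIntegrable_rpow'
      norm_num
    have := (h1.const_mul 2).1
    exact this.mono_set Ioo_subset_Ioc_self
  refine Integrable.mono' hb (Real.measurable_log.aestronglyMeasurable) ?_
  rw [ae_restrict_iff' measurableSet_Ioo]
  refine ae_of_all _ fun t ht => ?_
  obtain ⟨h0, h1⟩ := ht
  have hst : 0 < Real.sqrt t := Real.sqrt_pos.mpr h0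
  have hlog : Real.log t ≤ 0 := Real.log_nonpos h0.le h1.le
  rw [Real.norm_eq_abs, abs_of_nonpos hlog]
  have h2 : Real.log t = 2 * Real.log (Real.sqrt t) := by
    rw [Real.log_sqrt h0.le]; ring
  have h3 : Real.log ((Real.sqrt t)⁻¹) ≤ (Real.sqrt t)⁻¹ - 1 :=
    Real.log_le_sub_one_of_pos (by positivity)
  have h4 : t ^ (-(1:ℝ)/2) = (Real.sqrt t)⁻¹ := by
    rw [show -(1:ℝ)/2 = -(1/2) by ring, Real.rpow_neg h0.le, ← Real.sqrt_eq_rpow]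
  rw [h4, h2, Real.log_inv] at *
  nlinarith [h3]

lemma int_mul {g : ℝ → ℝ} (hg : ContinuousOn g (Ioo 0 1)) {C : ℝ}
    (hC : ∀ t ∈ Ioo (0:ℝ) 1, |g t| ≤ C) {f : ℝ → ℝ} (hf : IntegrableOn f (Ioo 0 1)) :
    IntegrableOn (fun t => g t * f t) (Ioo 0 1) := by
  refine Integrable.bdd_mul (c := C) hf (hg.aestronglyMeasurable measurableSet_Ioo) ?_
  rw [ae_restrict_iff' measurableSet_Ioo]
  exact ae_of_all _ fun t ht => by simpa [Real.norm_eq_abs] using hC t ht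

lemma prod_fact (n : ℕ) : (n.factorial) * ∏ j ∈ Finset.range (n+1), (n+1+j) = (2*n+1).factorial := by
  have h1 : ∏ j ∈ Finset.range (n+1), (n+1+j) = ∏ i ∈ Finset.Ico (n+1) (2*n+2), i := by
    rw [Finset.prod_Ico_eq_prod_range, show 2*n+2 - (n+1) = n+1 by omega]
  rw [h1, ← Finset.prod_Ico_id_eq_factorial n, Finset.prod_Ico_consecutive _ (by omega : 1 ≤ n+1) (by omega : n+1 ≤ 2*n+2)]
  have := Finset.prod_Ico_id_eq_factorial (2*n+1)
  rw [show 2*n+1+1 = 2*n+2 from rfl] at this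
  rw [this]

lemma beta_nat (n : ℕ) :
    ∫ t in (0:ℝ)..1, t^n * (1-t)^n = ((n.factorial : ℝ))^2 / ((2*n+1).factorial : ℝ) := by
  have hu : 0 < Complex.re ((n:ℂ)+1) := by
    simp only [Complex.add_re, Complex.natCast_re, Complex.one_re]
    positivity
  have hb := Complex.betaIntegral_eval_nat_add_one_right hu n
  rw [Complex.betaIntegral] at hb
  have hint : (∫ x in (0:ℝ)..1, (x:ℂ) ^ (((n:ℂ)+1) - 1) * ((1:ℂ) - x) ^ (((n:ℂ)+1) - 1))
      = ((∫ t in (0:ℝ)..1, t^n * (1-t)^n : ℝ) : ℂ) := by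
    rw [← intervalIntegral.integral_ofReal]
    apply intervalIntegral.integral_congr
    intro x _
    have he : ((n:ℂ)+1) - 1 = ((n:ℕ) : ℂ) := by ring
    show (x:ℂ) ^ (((n:ℂ)+1) - 1) * ((1:ℂ) - x) ^ (((n:ℂ)+1) - 1) = ((x^n * (1-x)^n : ℝ) : ℂ)
    rw [he, Complex.cpow_natCast, Complex.cpow_natCast]
    push_cast
    ring
  rw [hint] at hb
  have hprod : (∏ j ∈ Finset.range (n+1), (((n:ℂ)+1) + j)) = (((2*n+1).factorial / (n.factorial) : ℕ) : ℂ) := by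
    have h2 : (∏ j ∈ Finset.range (n+1), (((n:ℂ)+1) + j)) = ((∏ j ∈ Finset.range (n+1), (n+1+j) : ℕ) : ℂ) := by
      push_cast
      ring_nf
    rw [h2]
    congr 1
    exact (Nat.div_eq_of_eq_mul_right (Nat.factorial_pos n) (prod_fact n).symm).symm
  rw [hprod] at hb
  have hdvd : (n.factorial) ∣ (2*n+1).factorial := Nat.factorial_dvd_factorial (by omega)
  have hne : ((n.factorial:ℝ)) ≠ 0 := by positivity
  have h2ne : (((2*n+1).factorial : ℝ)) ≠ 0 := by positivity
  have : ((∫ t in (0:ℝ)..1, t^n * (1-t)^n : ℝ) : ℂ) = ((((n.factorial:ℝ))^2 / ((2*n+1).factorial : ℝ) : ℝ) : ℂ) := by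
    rw [hb]
    rw [Nat.cast_div hdvd (by exact_mod_cast Nat.factorial_ne_zero n)]
    push_cast
    field_simp
  exact_mod_cast this

-- batch 3
lemma sqrt3_gt_one : 1 < √3 := by nlinarith [sq_sqrt3, sqrt3_pos]

lemma ff_cont (n : ℕ) : Continuous (ff n) := by
  unfold ff; fun_prop

lemma ff_int (n : ℕ) : IntegrableOn (ff n) (Ioo (0:ℝ) 1) :=
  (((ff_cont n).intervalIntegrable 0 1).1).mono_set Ioo_subset_Ioc_self

lemma ff_bound (n : ℕ) {t : ℝ} (ht : t ∈ Ioo (0:ℝ) 1) : ‖ff n t‖ ≤ (1/2) * (1/3)^n := by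
  obtain ⟨h0, h1⟩ := ht
  have h2 : (0:ℝ) ≤ t*(1-t) := by nlinarith
  have h3 : t*(1-t) ≤ 1 := by nlinarith
  have h4 : (t*(1-t))^(2*n) ≤ 1 := pow_le_one₀ h2 h3
  have h5 : (0:ℝ) ≤ (t*(1-t))^(2*n) := pow_nonneg h2 _
  have h6 : (1:ℝ) ≤ 2*(n:ℝ)+1 := by
    have : (0:ℝ) ≤ (n:ℝ) := Nat.cast_nonneg n
    linarith
  rw [Real.norm_eq_abs]
  unfold ff
  rw [abs_div, abs_mul, abs_mul, abs_pow]
  have : |(-1/3 : ℝ)| = 1/3 := by norm_num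
  rw [this, abs_of_nonneg h5, abs_of_nonneg (by norm_num : (0:ℝ) ≤ 1/2)]
  have h7 : |(2*(n:ℝ)+1)| = 2*(n:ℝ)+1 := abs_of_pos (by positivity)
  have h8 : (1:ℝ) ≤ |(2*(n:ℝ)+1)| := by rw [h7]; push_cast; linarith [Nat.cast_nonneg (α := ℝ) n]
  have hA : 1/2 * (1/3:ℝ)^n * (t*(1-t))^(2*n) ≤ 1/2*(1/3)^n := by
    nlinarith [pow_pos (show (0:ℝ) < 1/3 by norm_num) n]
  exact (div_le_self (by positivity) h8).trans hA

lemma term_eq (n : ℕ) :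
    (-1/3 : ℝ)^n / ((2*(n:ℝ)+1)^2 * (Nat.choose (4*n+2) (2*n+1) : ℝ)) =
      ∫ t in Ioo (0:ℝ) 1, ff n t := by
  have hbeta := beta_nat (2*n)
  rw [show 2*(2*n)+1 = 4*n+1 by ring] at hbeta
  have hIoo : ∫ t in Ioo (0:ℝ) 1, ff n t
      = (1/2) * (-1/3:ℝ)^n / (2*(n:ℝ)+1) * (((2*n).factorial:ℝ)^2 / ((4*n+1).factorial : ℝ)) := by
    rw [← integral_Ioc_eq_integral_Ioo, ← intervalIntegral.integral_of_le zero_le_one]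
    have : ∀ t ∈ uIcc (0:ℝ) 1, ff n t = ((1/2) * (-1/3:ℝ)^n / (2*(n:ℝ)+1)) * (t^(2*n) * (1-t)^(2*n)) := by
      intro t _; unfold ff; rw [mul_pow]; ring
    rw [intervalIntegral.integral_congr this, intervalIntegral.integral_const_mul, hbeta]
  rw [hIoo]
  have hchoose := Nat.choose_mul_factorial_mul_factorial (show 2*n+1 ≤ 4*n+2 by omega)
  rw [show 4*n+2 - (2*n+1) = 2*n+1 by omega] at hchoose
  have hCr : (Nat.choose (4*n+2) (2*n+1) : ℝ) * ((2*n+1).factorial:ℝ) * ((2*n+1).factorial:ℝ)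
      = ((4*n+2).factorial:ℝ) := by exact_mod_cast hchoose
  have h1 : ((2*n+1).factorial : ℝ) = (2*(n:ℝ)+1) * ((2*n).factorial:ℝ) := by
    rw [show (2*n+1) = (2*n)+1 from rfl, Nat.factorial_succ]; push_cast; ring
  have h2 : ((4*n+2).factorial : ℝ) = (4*(n:ℝ)+2) * ((4*n+1).factorial : ℝ) := by
    rw [show (4*n+2) = (4*n+1)+1 from rfl, Nat.factorial_succ]; push_cast; ring
  rw [h1, h2] at hCr
  have e1 : (0:ℝ) < 2*(n:ℝ)+1 := by positivity
  have e2 : (0:ℝ) < ((2*n).factorial:ℝ) := by exact_mod_cast Nat.factorial_pos _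
  have e3 : (0:ℝ) < ((4*n+1).factorial:ℝ) := by exact_mod_cast Nat.factorial_pos _
  have e4 : (0:ℝ) < (Nat.choose (4*n+2) (2*n+1) : ℝ) := by
    exact_mod_cast Nat.choose_pos (show 2*n+1 ≤ 4*n+2 by omega)
  have hC2 : ((Nat.choose (4*n+2) (2*n+1)) : ℝ)
      = (4*(n:ℝ)+2) * ((4*n+1).factorial:ℝ) / ((2*(n:ℝ)+1)^2 * ((2*n).factorial:ℝ)^2) := by
    rw [eq_div_iff (by positivity)]
    linear_combination hCr
  rw [hC2]
  field_simp
  ring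

lemma hasSum_ff {t : ℝ} (h : t ∈ Ioo (0:ℝ) 1) : HasSum (fun n => ff n t) (GG t) := by
  obtain ⟨h0, h1⟩ := h
  set x : ℝ := (t - t^2)/√3 with hxdef
  have hx0 : 0 ≤ x := by
    apply div_nonneg _ sqrt3_pos.le; nlinarith
  have hx1 : x < 1 := by
    rw [hxdef, div_lt_one sqrt3_pos]
    nlinarith [sqrt3_gt_one]
  have hs := Real.hasSum_arctan (x := x) (by rw [Real.norm_eq_abs, abs_of_nonneg hx0]; exact hx1)
  have hs2 := hs.mul_left ((√3/2) * (1/t + 1/(1-t)))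
  have hGG : GG t = ((√3/2) * (1/t + 1/(1-t))) * arctan x := by
    unfold GG hh; rw [hxdef]; ring
  rw [← hGG] at hs2
  refine hs2.congr_fun fun n => ?_
  have hb : t - t^2 = t*(1-t) := by ring
  have hpow : x^(2*n+1) = (t*(1-t))^(2*n+1) / (3^n * √3) := by
    rw [hxdef, div_pow, hb, pow_succ (√3) (2*n), pow_mul, sq_sqrt3]
  rw [hpow]
  unfold ff
  have ht0 : t ≠ 0 := ne_of_gt h0
  have ht1 : (1:ℝ) - t ≠ 0 := by linarith
  have h3 : (3:ℝ)^n ≠ 0 := by positivity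
  have hsq : √3 ≠ 0 := ne_of_gt sqrt3_pos
  have hden : (2*(n:ℝ)+1) ≠ 0 := by positivity
  have hneg : (-1/3 : ℝ)^n = (-1)^n / 3^n := by rw [div_pow]
  rw [hneg]
  field_simp
  push_cast
  ring

-- batch 4
lemma vol_Ioo : volume (Ioo (0:ℝ) 1) < ⊤ := by
  rw [Real.volume_Ioo]; exact ENNReal.ofReal_lt_top

lemma summable_norm_int : Summable (fun n => ∫ t in Ioo (0:ℝ) 1, ‖ff n t‖) := by
  have hb : ∀ n, ∫ t in Ioo (0:ℝ) 1, ‖ff n t‖ ≤ (1/2)*(1/3)^n := by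
    intro n
    have h2 : IntegrableOn (fun _ : ℝ => (1/2)*(1/3:ℝ)^n) (Ioo (0:ℝ) 1) :=
      integrableOn_const vol_Ioo.ne
    have h3 := setIntegral_mono_on (ff_int n).norm h2 measurableSet_Ioo
      (fun t ht => ff_bound n ht)
    calc ∫ t in Ioo (0:ℝ) 1, ‖ff n t‖ ≤ ∫ _ in Ioo (0:ℝ) 1, (1/2)*(1/3:ℝ)^n := h3
      _ = (1/2)*(1/3:ℝ)^n := by
          rw [setIntegral_const]
          simp [Real.volume_Ioo]
  refine Summable.of_nonneg_of_le (fun n => integral_nonneg fun t => norm_nonneg _) hb ?_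
  exact (summable_geometric_of_lt_one (by norm_num) (by norm_num)).mul_left _

lemma sum_eq_int_GG :
    ∑' n : ℕ, (-1 / 3 : ℝ) ^ n /
      ((2 * (n : ℝ) + 1) ^ 2 * (Nat.choose (4 * n + 2) (2 * n + 1) : ℝ)) =
      ∫ t in Ioo (0:ℝ) 1, GG t := by
  calc ∑' n : ℕ, (-1 / 3 : ℝ) ^ n /
      ((2 * (n : ℝ) + 1) ^ 2 * (Nat.choose (4 * n + 2) (2 * n + 1) : ℝ))
      = ∑' n : ℕ, ∫ t in Ioo (0:ℝ) 1, ff n t := by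
        refine tsum_congr fun n => ?_
        exact term_eq n
    _ = ∫ t in Ioo (0:ℝ) 1, ∑' n, ff n t :=
        integral_tsum_of_summable_integral_norm (fun n => ff_int n) summable_norm_int
    _ = ∫ t in Ioo (0:ℝ) 1, GG t :=
        setIntegral_congr_fun measurableSet_Ioo (fun t ht => (hasSum_ff ht).tsum_eq)

lemma hh_cont : Continuous hh := Real.continuous_arctan.comp (by fun_prop)

lemma GG_contOn : ContinuousOn GG (Ioo 0 1) := by
  have c1 : ContinuousOn (fun t : ℝ => 1/t) (Ioo 0 1) :=
    continuousOn_const.div continuousOn_id (fun t ht => ne_of_gt ht.1)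
  have c2 : ContinuousOn (fun t : ℝ => 1/(1-t)) (Ioo 0 1) :=
    continuousOn_const.div (continuousOn_const.sub continuousOn_id)
      (fun t ht => ne_of_gt (by linarith [ht.2] : (0:ℝ) < 1 - t))
  exact ((continuousOn_const.mul hh_cont.continuousOn).mul (c1.add c2))

lemma GG_bound : ∀ t ∈ Ioo (0:ℝ) 1, |GG t| ≤ 1/2 := by
  intro t ht
  obtain ⟨h0, h1⟩ := ht
  have ht0 : t ≠ 0 := ne_of_gt h0
  have ht1 : (1:ℝ) - t ≠ 0 := ne_of_gt (by linarith)
  have hprod : (0:ℝ) < t*(1-t) := by nlinarith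
  have hsum : 1/t + 1/(1-t) = 1/(t*(1-t)) := by field_simp; ring
  obtain ⟨hb0, hb1⟩ := hh_bound ⟨h0.le, h1.le⟩
  have hGnn : 0 ≤ GG t := by
    unfold GG; rw [hsum]
    have := sqrt3_pos
    positivity
  rw [abs_of_nonneg hGnn]
  unfold GG; rw [hsum]
  have step : (√3/2) * hh t * (1/(t*(1-t))) ≤ (√3/2) * ((t - t^2)/√3) * (1/(t*(1-t))) :=
    mul_le_mul_of_nonneg_right (mul_le_mul_of_nonneg_left hb1 (by positivity)) (by positivity)
  refine step.trans (le_of_eq ?_)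
  have hb : t - t^2 = t*(1-t) := by ring
  rw [hb]
  field_simp

lemma GG_int : IntegrableOn GG (Ioo (0:ℝ) 1) := by
  refine Integrable.mono' (g := fun _ => (1/2:ℝ))
    (integrableOn_const vol_Ioo.ne)
    (GG_contOn.aestronglyMeasurable measurableSet_Ioo) ?_
  rw [ae_restrict_iff' measurableSet_Ioo]
  exact ae_of_all _ fun t ht => by simpa [Real.norm_eq_abs] using GG_bound t ht

lemma log_one_sub_int : IntegrableOn (fun t : ℝ => log (1-t)) (Ioo 0 1) := by
  have h1 : IntervalIntegrable log volume 0 1 :=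
    (intervalIntegrable_iff_integrableOn_Ioo_of_le zero_le_one).mpr integrableOn_log01
  have h2 := (h1.comp_sub_left 1).symm
  simp only [sub_self, sub_zero] at h2
  exact (intervalIntegrable_iff_integrableOn_Ioo_of_le zero_le_one).mp h2

lemma ww_int : IntegrableOn ww (Ioo (0:ℝ) 1) := integrableOn_log01.sub log_one_sub_int

lemma q1_inv_bound (t : ℝ) : |1/q1 t| ≤ 4/3 := by
  have h1 : (3:ℝ)/4 ≤ q1 t := by unfold q1; nlinarith [sq_nonneg (t + 1/2)]
  rw [abs_of_nonneg (le_of_lt (one_div_pos.mpr (q1_pos t)))]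
  rw [div_le_div_iff₀ (q1_pos t) (by norm_num)]
  linarith

lemma q2_inv_bound (t : ℝ) : |1/q2 t| ≤ 4/3 := by
  have h1 : (3:ℝ)/4 ≤ q2 t := by unfold q2; nlinarith [sq_nonneg (t - 3/2)]
  rw [abs_of_nonneg (le_of_lt (one_div_pos.mpr (q2_pos t)))]
  rw [div_le_div_iff₀ (q2_pos t) (by norm_num)]
  linarith

lemma q1_inv_contOn : ContinuousOn (fun t : ℝ => 1/q1 t) (Ioo 0 1) := by
  apply continuousOn_const.div
  · unfold q1; fun_prop
  · exact fun t _ => (q1_pos t).ne'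

lemma q2_inv_contOn : ContinuousOn (fun t : ℝ => 1/q2 t) (Ioo 0 1) := by
  apply continuousOn_const.div
  · unfold q2; fun_prop
  · exact fun t _ => (q2_pos t).ne'

lemma RR_int : IntegrableOn (fun t => ((√3/2) * (1/q1 t - 1/q2 t)) * ww t) (Ioo (0:ℝ) 1) := by
  refine int_mul (C := (√3/2) * (8/3)) ?_ ?_ ww_int
  · exact continuousOn_const.mul (q1_inv_contOn.sub q2_inv_contOn)
  · intro t _
    rw [abs_mul, abs_of_nonneg (by positivity : (0:ℝ) ≤ √3/2)]
    apply mul_le_mul_of_nonneg_left _ (by positivity)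
    calc |1/q1 t - 1/q2 t| ≤ |1/q1 t| + |1/q2 t| := abs_sub _ _
      _ ≤ 4/3 + 4/3 := add_le_add (q1_inv_bound t) (q2_inv_bound t)
      _ = 8/3 := by norm_num

-- batch 5
lemma uu_io (n : ℕ) : uu n ∈ Ioo (0:ℝ) 1 :=
  ⟨(uu_mem n).1, (uu_mem n).2.trans (by norm_num)⟩

lemma uu_le (n : ℕ) : uu n ≤ 1 - uu n := by linarith [(uu_mem n).2]

lemma uIcc_sub (n : ℕ) : uIcc (uu n) (1 - uu n) ⊆ Ioo (0:ℝ) 1 := by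
  rw [uIcc_of_le (uu_le n)]
  intro x hx
  exact ⟨lt_of_lt_of_le (uu_mem n).1 hx.1, lt_of_le_of_lt hx.2 (by linarith [(uu_mem n).1])⟩

lemma ibp (n : ℕ) : ∫ t in (uu n)..(1 - uu n), GG t =
    (√3/2) * (-2 * (hh (uu n) * ww (uu n))) -
      (√3/2) * ∫ t in (uu n)..(1 - uu n), ((√3/2) * (1/q1 t - 1/q2 t)) * ww t := by
  set a := uu n
  set b := 1 - uu n
  have hsub := uIcc_sub n
  have hu : ∀ x ∈ uIcc a b, HasDerivAt hh ((√3/2) * (1/q1 x - 1/q2 x)) x :=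
    fun x _ => hh_deriv x
  have hv : ∀ x ∈ uIcc a b, HasDerivAt ww (1/x + 1/(1-x)) x :=
    fun x hx => ww_deriv (hsub hx)
  have hu' : IntervalIntegrable (fun x => (√3/2) * (1/q1 x - 1/q2 x)) volume a b := by
    apply ContinuousOn.intervalIntegrable
    exact (continuousOn_const.mul ((q1_inv_contOn.mono hsub).sub (q2_inv_contOn.mono hsub)))
  have hv' : IntervalIntegrable (fun x => 1/x + 1/(1-x)) volume a b := by
    apply ContinuousOn.intervalIntegrable
    apply ContinuousOn.add
    · exact continuousOn_const.div continuousOn_id (fun x hx => ne_of_gt (hsub hx).1)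
    · exact continuousOn_const.div (continuousOn_const.sub continuousOn_id)
        (fun x hx => ne_of_gt (by linarith [(hsub hx).2] : (0:ℝ) < 1 - x))
  have key := intervalIntegral.integral_mul_deriv_eq_deriv_mul hu hv hu' hv'
  have hGG : ∀ t ∈ uIcc a b, GG t = (√3/2) * (hh t * (1/t + 1/(1-t))) := by
    intro t _; unfold GG; ring
  rw [intervalIntegral.integral_congr hGG, intervalIntegral.integral_const_mul, key]
  have e1 : hh b = hh a := by rw [show b = 1 - a from rfl, hh_reflect]
  have e2 : ww b = - ww a := by rw [show b = 1 - a from rfl, ww_reflect]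
  rw [e1, e2]
  ring

lemma boundary_tendsto : Tendsto (fun n => hh (uu n) * ww (uu n)) atTop (𝓝 0) := by
  have l1 : Tendsto (fun n => uu n * log (uu n)) atTop (𝓝 0) := by
    have := (continuous_mul_log.tendsto 0).comp uu_tendsto
    simpa [Function.comp_def] using this
  have l2 : Tendsto (fun n => uu n * log (1 - uu n)) atTop (𝓝 0) := by
    have ha : Tendsto (fun n => (1:ℝ) - uu n) atTop (𝓝 1) := by
      have := uu_tendsto.const_sub 1
      simpa using this
    have hb : Tendsto (fun n => log (1 - uu n)) atTop (𝓝 0) := by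
      have := ((Real.continuousAt_log one_ne_zero).tendsto).comp ha
      simpa [Function.comp_def] using this
    simpa using uu_tendsto.mul hb
  have hbnd : ∀ n, ‖hh (uu n) * ww (uu n)‖ ≤
      (1/√3) * (|uu n * log (uu n)| + |uu n * log (1 - uu n)|) := by
    intro n
    set u := uu n
    have hu := uu_io n
    obtain ⟨h0, h1⟩ := hu
    obtain ⟨hb0, hb1⟩ := hh_bound ⟨h0.le, h1.le⟩
    have hb2 : hh u ≤ u / √3 := by
      refine hb1.trans ?_
      rw [div_le_div_iff₀ sqrt3_pos sqrt3_pos]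
      nlinarith [sqrt3_pos]
    rw [norm_eq_abs, abs_mul, abs_of_nonneg hb0]
    have h3 : |ww u| ≤ |log u| + |log (1-u)| := abs_sub _ _
    calc hh u * |ww u| ≤ (u/√3) * (|log u| + |log (1-u)|) :=
          mul_le_mul hb2 h3 (abs_nonneg _) (by positivity)
      _ = (1/√3) * (|u * log u| + |u * log (1-u)|) := by
          rw [abs_mul, abs_mul, abs_of_pos h0]; ring
  have hlim : Tendsto (fun n => (1/√3) * (|uu n * log (uu n)| + |uu n * log (1 - uu n)|))
      atTop (𝓝 0) := by
    have := ((l1.abs).add (l2.abs)).const_mul (1/√3)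
    simpa using this
  exact squeeze_zero_norm hbnd hlim

lemma step4 : ∫ t in Ioo (0:ℝ) 1, GG t =
    -(3/4) * ∫ t in Ioo (0:ℝ) 1, (1/q1 t - 1/q2 t) * ww t := by
  have hb1 : Tendsto (fun n => 1 - uu n) atTop (𝓝 1) := by
    simpa using uu_tendsto.const_sub 1
  have hab : ∀ n, 0 < uu n ∧ uu n ≤ 1 - uu n ∧ 1 - uu n < 1 :=
    fun n => ⟨(uu_mem n).1, uu_le n, by linarith [(uu_mem n).1]⟩
  have t1 := tendsto_II GG_int uu_tendsto hb1 hab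
  have t2 := tendsto_II RR_int uu_tendsto hb1 hab
  have tb : Tendsto (fun n => (√3/2) * (-2 * (hh (uu n) * ww (uu n)))) atTop (𝓝 0) := by
    have := (boundary_tendsto.const_mul (-2:ℝ)).const_mul (√3/2)
    simpa using this
  have t3 := tb.sub (t2.const_mul (√3/2))
  rw [zero_sub] at t3
  have t4 := t3.congr (fun n => (ibp n).symm)
  have key := tendsto_nhds_unique t1 t4
  rw [key]
  have hpull : ∫ t in Ioo (0:ℝ) 1, ((√3/2) * (1/q1 t - 1/q2 t)) * ww t
      = (√3/2) * ∫ t in Ioo (0:ℝ) 1, (1/q1 t - 1/q2 t) * ww t := by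
    rw [← MeasureTheory.integral_const_mul]
    apply setIntegral_congr_fun measurableSet_Ioo
    intro t _
    ring
  rw [hpull]
  linear_combination (-(∫ t in Ioo (0:ℝ) 1, (1/q1 t - 1/q2 t) * ww t)/4) * sq_sqrt3

-- batch 6
lemma ii_eq (f : ℝ → ℝ) : ∫ t in (0:ℝ)..1, f t = ∫ t in Ioo (0:ℝ) 1, f t := by
  rw [intervalIntegral.integral_of_le zero_le_one, integral_Ioc_eq_integral_Ioo]

lemma i1 : IntegrableOn (fun t : ℝ => (1/q1 t) * log t) (Ioo 0 1) :=
  int_mul q1_inv_contOn (fun t _ => q1_inv_bound t) integrableOn_log01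
lemma i2 : IntegrableOn (fun t : ℝ => (1/q2 t) * log t) (Ioo 0 1) :=
  int_mul q2_inv_contOn (fun t _ => q2_inv_bound t) integrableOn_log01
lemma i3 : IntegrableOn (fun t : ℝ => (1/q1 t) * log (1-t)) (Ioo 0 1) :=
  int_mul q1_inv_contOn (fun t _ => q1_inv_bound t) log_one_sub_int
lemma i4 : IntegrableOn (fun t : ℝ => (1/q2 t) * log (1-t)) (Ioo 0 1) :=
  int_mul q2_inv_contOn (fun t _ => q2_inv_bound t) log_one_sub_int

lemma reflect3 : ∫ t in Ioo (0:ℝ) 1, (1/q1 t) * log (1-t) = ∫ t in Ioo (0:ℝ) 1, (1/q2 t) * log t := by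
  rw [← ii_eq, ← ii_eq]
  have h1 : ∀ x ∈ uIcc (0:ℝ) 1, (1/q1 x) * log (1-x) = (fun s => (1/q2 s) * log s) (1 - x) := by
    intro x _
    simp only
    have hq := q1_reflect (1-x)
    rw [show (1:ℝ) - (1-x) = x by ring] at hq
    rw [← hq]
  rw [intervalIntegral.integral_congr h1, intervalIntegral.integral_comp_sub_left (fun s => (1/q2 s) * log s) 1]
  norm_num

lemma reflect4 : ∫ t in Ioo (0:ℝ) 1, (1/q2 t) * log (1-t) = ∫ t in Ioo (0:ℝ) 1, (1/q1 t) * log t := by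
  rw [← ii_eq, ← ii_eq]
  have h1 : ∀ x ∈ uIcc (0:ℝ) 1, (1/q2 x) * log (1-x) = (fun s => (1/q1 s) * log s) (1 - x) := by
    intro x _
    simp only
    rw [q1_reflect x]
  rw [intervalIntegral.integral_congr h1, intervalIntegral.integral_comp_sub_left (fun s => (1/q1 s) * log s) 1]
  norm_num

lemma ps_eq (t : ℝ) : ps t = (1/q1 t) * log (1-t) - (1/q1 t) * log t := by
  unfold ps; ring

lemma ps_int : IntegrableOn ps (Ioo (0:ℝ) 1) := by
  have h := int_mul q1_inv_contOn (fun t _ => q1_inv_bound t) (log_one_sub_int.sub integrableOn_log01)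
  refine IntegrableOn.congr_fun h (fun t _ => ?_) measurableSet_Ioo
  simp only [Pi.sub_apply]
  unfold ps; ring

lemma int_ps_eq : ∫ t in Ioo (0:ℝ) 1, ps t =
    (∫ t in Ioo (0:ℝ) 1, (1/q2 t) * log t) - ∫ t in Ioo (0:ℝ) 1, (1/q1 t) * log t := by
  have h1 : ∫ t in Ioo (0:ℝ) 1, ps t
      = ∫ t in Ioo (0:ℝ) 1, ((1/q1 t) * log (1-t) - (1/q1 t) * log t) :=
    setIntegral_congr_fun measurableSet_Ioo (fun t _ => ps_eq t)
  rw [h1, integral_sub i3 i1, reflect3]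

lemma split_reflect : ∫ t in Ioo (0:ℝ) 1, (1/q1 t - 1/q2 t) * ww t =
    -2 * ∫ t in Ioo (0:ℝ) 1, ps t := by
  have h1 : ∫ t in Ioo (0:ℝ) 1, (1/q1 t - 1/q2 t) * ww t
      = ∫ t in Ioo (0:ℝ) 1, (((1/q1 t) * log t - (1/q2 t) * log t)
          - ((1/q1 t) * log (1-t) - (1/q2 t) * log (1-t))) := by
    apply setIntegral_congr_fun measurableSet_Ioo
    intro t _
    unfold ww
    ring
  have hA : IntegrableOn (fun t : ℝ => (1/q1 t) * log t - (1/q2 t) * log t) (Ioo 0 1) := i1.sub i2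
  have hB : IntegrableOn (fun t : ℝ => (1/q1 t) * log (1-t) - (1/q2 t) * log (1-t)) (Ioo 0 1) := i3.sub i4
  rw [h1, integral_sub hA hB, integral_sub i1 i2, integral_sub i3 i4,
    reflect3, reflect4, int_ps_eq]
  ring

lemma q1_inv_cont : Continuous (fun t : ℝ => 1/q1 t) := by
  apply continuous_const.div
  · unfold q1; fun_prop
  · exact fun t => (q1_pos t).ne'

lemma q1_inv_int : IntegrableOn (fun t : ℝ => 1/q1 t) (Ioo (0:ℝ) 1) :=
  ((q1_inv_cont.intervalIntegrable 0 1).1).mono_set Ioo_subset_Ioc_self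

lemma arctan_sqrt3 : arctan √3 = π/3 := by
  rw [← Real.tan_pi_div_three, Real.arctan_tan] <;> nlinarith [Real.pi_pos]

lemma arctan_inv_sqrt3 : arctan (1/√3) = π/6 := by
  rw [← Real.tan_pi_div_six, Real.arctan_tan] <;> nlinarith [Real.pi_pos]

lemma A_val : ∫ t in (0:ℝ)..1, 1 / q1 t = π / (3*√3) := by
  have hderiv : ∀ t ∈ uIcc (0:ℝ) 1, HasDerivAt (fun s => (2/√3) * arctan ((2*s+1)/√3)) (1/q1 t) t := by
    intro t _
    have h1 : HasDerivAt (fun s : ℝ => (2*s+1)/√3) (2/√3) t := by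
      have := (((hasDerivAt_id t).const_mul 2).add_const 1).div_const √3
      simpa using this
    have h2 := ((Real.hasDerivAt_arctan ((2*t+1)/√3)).comp t h1).const_mul (2/√3)
    refine h2.congr_deriv (Eq.symm ?_)
    have hs := sqrt3_pos
    have h4 : 1 + ((2*t+1)/√3)^2 = (3 + (2*t+1)^2)/3 := by
      rw [div_pow, sq_sqrt3]; ring
    rw [h4]
    have h5 : (3:ℝ) + (2*t+1)^2 = 4 * q1 t := by unfold q1; ring
    rw [h5]
    have hq := q1_pos t
    field_simp
    linear_combination (4:ℝ) * sq_sqrt3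
  rw [intervalIntegral.integral_eq_sub_of_hasDerivAt hderiv
    ((q1_inv_cont.continuousOn).intervalIntegrable)]
  have e1 : (2*(1:ℝ)+1)/√3 = √3 := by
    rw [div_eq_iff sqrt3_pos.ne']
    linear_combination (-1:ℝ) * sq_sqrt3
  have e0 : (2*(0:ℝ)+1)/√3 = 1/√3 := by norm_num
  rw [e1, e0, arctan_sqrt3, arctan_inv_sqrt3]
  have hs := sqrt3_pos
  field_simp
  ring

-- batch 7
lemma phi_mem {t : ℝ} (h : t ∈ Ioo (0:ℝ) 1) : phi t ∈ Ioo (0:ℝ) 1 := by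
  obtain ⟨h0, h1⟩ := h
  have hd : (0:ℝ) < 1 + 2*t := by linarith
  constructor
  · exact div_pos (by linarith) hd
  · show (1-t)/(1+2*t) < 1
    rw [div_lt_one hd]
    linarith

lemma phi_deriv {t : ℝ} (h : 0 < t) : HasDerivAt phi (-3/(1+2*t)^2) t := by
  have hd : (1:ℝ) + 2*t ≠ 0 := by positivity
  have h1 : HasDerivAt (fun s : ℝ => 1 - s) (-1) t := by
    simpa using (hasDerivAt_id t).const_sub (1:ℝ)
  have h2 : HasDerivAt (fun s : ℝ => 1 + 2*s) 2 t := by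
    simpa using ((hasDerivAt_id t).const_mul (2:ℝ)).const_add (1:ℝ)
  have := h1.div h2 hd
  refine this.congr_deriv ?_
  field_simp
  ring

lemma phi_anti {x y : ℝ} (hx : 0 ≤ x) (hxy : x ≤ y) : phi y ≤ phi x := by
  unfold phi
  rw [div_le_div_iff₀ (by linarith) (by linarith)]
  nlinarith

lemma ps_contOn : ContinuousOn ps (Ioo (0:ℝ) 1) := by
  apply ContinuousOn.div
  · apply ContinuousOn.sub
    · apply ContinuousOn.log
      · exact continuousOn_const.sub continuousOn_id
      · exact fun t ht => ne_of_gt (by linarith [ht.2] : (0:ℝ) < 1 - t)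
    · exact ContinuousOn.log continuousOn_id (fun t ht => ne_of_gt ht.1)
  · unfold q1; fun_prop
  · exact fun t _ => (q1_pos t).ne'

lemma subst_id (n : ℕ) : ∫ x in (phi (uu n))..(phi (1 - uu n)), ps x
    = ∫ t in (uu n)..(1 - uu n), (-(log 3 + log t - log (1-t))/q1 t) := by
  set a := uu n with ha
  set b := 1 - uu n with hb
  have hsub := uIcc_sub n
  have hderiv : ∀ t ∈ uIcc a b, HasDerivAt phi (-3/(1+2*t)^2) t :=
    fun t ht => phi_deriv (hsub ht).1
  have hcont' : ContinuousOn (fun t : ℝ => -3/(1+2*t)^2) (uIcc a b) := by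
    apply continuousOn_const.div (by fun_prop)
    intro t ht
    have := (hsub ht).1
    positivity
  have himg : phi '' (uIcc a b) ⊆ Ioo (0:ℝ) 1 := by
    rintro x ⟨t, ht, rfl⟩
    exact phi_mem (hsub ht)
  have key := intervalIntegral.integral_comp_smul_deriv' hderiv hcont' (ps_contOn.mono himg)
  rw [← key]
  apply intervalIntegral.integral_congr
  intro t ht
  have h01 := hsub ht
  obtain ⟨h0, h1⟩ := h01
  have hd : (0:ℝ) < 1 + 2*t := by linarith
  have e1 : phi t = (1-t)/(1+2*t) := rfl
  have e2 : (1:ℝ) - phi t = 3*t/(1+2*t) := by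
    unfold phi; field_simp; ring
  have e3 : q1 (phi t) = 3 * q1 t / (1+2*t)^2 := by
    unfold phi q1; field_simp; ring
  have e4 : log (phi t) = log (1-t) - log (1+2*t) := by
    rw [e1, Real.log_div (by linarith) hd.ne']
  have e5 : log (1 - phi t) = log 3 + log t - log (1+2*t) := by
    rw [e2, Real.log_div (by positivity) hd.ne', Real.log_mul (by norm_num) h0.ne']
  show (-3/(1+2*t)^2) • ps (phi t) = -(log 3 + log t - log (1-t))/q1 t
  rw [smul_eq_mul]
  unfold ps
  rw [e3, e4, e5]
  have hq := q1_pos t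
  field_simp
  ring

lemma K_val : ∫ t in Ioo (0:ℝ) 1, ps t = Real.log 3 * (π/(3*√3)) / 2 := by
  set K := ∫ t in Ioo (0:ℝ) 1, ps t with hK
  set A := ∫ t in Ioo (0:ℝ) 1, 1/q1 t with hA
  have hb1 : Tendsto (fun n => 1 - uu n) atTop (𝓝 1) := by
    simpa using uu_tendsto.const_sub 1
  have hab : ∀ n, 0 < uu n ∧ uu n ≤ 1 - uu n ∧ 1 - uu n < 1 :=
    fun n => ⟨(uu_mem n).1, uu_le n, by linarith [(uu_mem n).1]⟩
  have huio : ∀ n, uu n ∈ Ioo (0:ℝ) 1 := fun n => ⟨(uu_mem n).1, by linarith [(uu_mem n).2]⟩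
  have hbio : ∀ n, (1 - uu n) ∈ Ioo (0:ℝ) 1 := fun n =>
    ⟨by linarith [(uu_mem n).2], by linarith [(uu_mem n).1]⟩
  -- limits of phi at endpoints
  have hphic : ∀ x : ℝ, 0 ≤ x → ContinuousAt phi x := by
    intro x hx
    apply ContinuousAt.div
    · fun_prop
    · fun_prop
    · positivity
  have hphi0 : Tendsto (fun n => phi (1 - uu n)) atTop (𝓝 0) := by
    have h0' : phi 1 = 0 := by unfold phi; norm_num
    have := ((hphic 1 zero_le_one).tendsto).comp hb1
    rw [h0'] at this
    exact this
  have hphi1 : Tendsto (fun n => phi (uu n)) atTop (𝓝 1) := by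
    have h1' : phi 0 = 1 := by unfold phi; norm_num
    have := ((hphic 0 le_rfl).tendsto).comp uu_tendsto
    rw [h1'] at this
    exact this
  have hab' : ∀ n, 0 < phi (1 - uu n) ∧ phi (1 - uu n) ≤ phi (uu n) ∧ phi (uu n) < 1 :=
    fun n => ⟨(phi_mem (hbio n)).1, phi_anti (uu_mem n).1.le (uu_le n), (phi_mem (huio n)).2⟩
  -- LHS tendsto
  have tL : Tendsto (fun n => ∫ x in (phi (1 - uu n))..(phi (uu n)), ps x) atTop (𝓝 K) :=
    tendsto_II ps_int hphi0 hphi1 hab'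
  have tLneg : Tendsto (fun n => ∫ x in (phi (uu n))..(phi (1 - uu n)), ps x) atTop (𝓝 (-K)) := by
    have := tL.neg
    refine this.congr fun n => ?_
    rw [intervalIntegral.integral_symm, neg_neg]
  -- RHS tendsto
  have tps := tendsto_II ps_int uu_tendsto hb1 hab
  have tq := tendsto_II q1_inv_int uu_tendsto hb1 hab
  have hrhs : ∀ n, ∫ t in (uu n)..(1 - uu n), (-(log 3 + log t - log (1-t))/q1 t)
      = (∫ t in (uu n)..(1 - uu n), ps t) - log 3 * ∫ t in (uu n)..(1 - uu n), 1/q1 t := by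
    intro n
    have hsub := uIcc_sub n
    have hints : IntervalIntegrable ps volume (uu n) (1 - uu n) :=
      (ps_contOn.mono hsub).intervalIntegrable
    have hintq : IntervalIntegrable (fun t => 1/q1 t) volume (uu n) (1 - uu n) :=
      q1_inv_cont.intervalIntegrable _ _
    have e : ∀ t ∈ uIcc (uu n) (1 - uu n),
        (-(log 3 + log t - log (1-t))/q1 t) = ps t - log 3 * (1/q1 t) := by
      intro t _
      unfold ps
      ring
    rw [intervalIntegral.integral_congr e,
      intervalIntegral.integral_sub hints (hintq.const_mul _)]
    rw [intervalIntegral.integral_const_mul]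
  have tR : Tendsto (fun n => ∫ x in (phi (uu n))..(phi (1 - uu n)), ps x) atTop
      (𝓝 (K - log 3 * A)) := by
    have := tps.sub ((tq.const_mul (log 3)))
    refine this.congr fun n => ?_
    rw [← hrhs n, ← subst_id n]
  have huniq := tendsto_nhds_unique tLneg tR
  have hAval : A = π/(3*√3) := by rw [hA, ← ii_eq]; exact A_val
  rw [hAval] at huniq
  linarith [huniq]


end St17

theorem stmt_17 :
    ∑' n : ℕ, (-1 / 3 : ℝ) ^ n /
      ((2 * (n : ℝ) + 1) ^ 2 * (Nat.choose (4 * n + 2) (2 * n + 1) : ℝ)) =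
    (Real.pi / (4 * Real.sqrt 3)) * Real.log 3 := by
  rw [St17.sum_eq_int_GG, St17.step4, St17.split_reflect, St17.K_val]
  have h3 : Real.sqrt 3 ≠ 0 := ne_of_gt St17.sqrt3_pos
  field_simp
end
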